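/- arXiv:2106.02262 — 4 statements merged into one kernel-verified Lean document; each statement's English description precedes it below -/
import Mathlib

section
/- Let n and q be positive integers and let a_1,…,a_q be nonnegative real numbers with Σ_{j=1}^q a_j = n−1. Let H be a bipartite graph with parts [n−1] and [q] and nonnegative edge weights (w_e)_{e∈E(H)} such that Σ_{e ∋ i} w_e = 1 for every i ∈ [n−1] and Σ_{e ∋ j} w_e = a_j for every j ∈ [q]. Then for every j* ∈ [q] there exists an assignment π : [n] → [q] such that: π(n) = j*; for every i ∈ [n−1], {i, π(i)} is an edge of H; |π⁻¹(j*)| = ⌊a_{j*}⌋ + 1; and for every j ∈ [q] with j ≠ j*, |π⁻¹(j)| ∈ {⌊a_j⌋, ⌈a_j⌉}. -/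
lemma stmt2_aux_card (c b : ℕ) :
    (Finset.univ.filter fun k : Fin c => b ≤ (k : ℕ)).card = c - b := by
  rw [← Nat.card_Ico b c]
  apply Finset.card_bij (fun (k : Fin c) _ => (k : ℕ))
  · intro k hk
    simp only [Finset.mem_filter, Finset.mem_univ, true_and] at hk
    simp [Finset.mem_Ico, hk, k.2]
  · intro k _ k' _ h
    exact Fin.ext h
  · intro x hx
    simp only [Finset.mem_Ico] at hx
    exact ⟨⟨x, hx.2⟩, by simp [hx.1], rfl⟩


/-- Let `n, q` be positive integers and `a_1,…,a_q` nonnegative reals summing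
to `n−1`. Let `H` be a bipartite graph with parts `[n−1]` and `[q]` and nonnegative edge
weights `w` with row sums `1` and column sums `a_j`. Then for every `j* ∈ [q]` there exists an
assignment `π : [n] → [q]` such that `π(n) = j*`; for every `i ∈ [n−1]`, `{i, π(i)}` is an edge
of `H`; `|π⁻¹(j*)| = ⌊a_{j*}⌋ + 1`; and for every `j ≠ j*`, `|π⁻¹(j)| ∈ {⌊a_j⌋, ⌈a_j⌉}`. -/
theorem stmt2 (n q : ℕ) (hn : 0 < n) (hq : 0 < q)
    (a : Fin q → ℝ) (ha : ∀ j, 0 ≤ a j) (hasum : ∑ j, a j = (n : ℝ) - 1)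
    (E : Fin (n - 1) → Fin q → Prop)
    (w : Fin (n - 1) → Fin q → ℝ)
    (hw0 : ∀ i j, 0 ≤ w i j)
    (hwE : ∀ i j, ¬ E i j → w i j = 0)
    (hrow : ∀ i, ∑ j, w i j = 1)
    (hcol : ∀ j, ∑ i, w i j = a j) :
    ∀ jstar : Fin q, ∃ π : Fin n → Fin q,
      π ⟨n - 1, Nat.sub_lt hn one_pos⟩ = jstar ∧
      (∀ i : Fin (n - 1), E i (π (Fin.castLE (Nat.sub_le n 1) i))) ∧
      ((Finset.univ.filter fun i => π i = jstar).card : ℤ) = ⌊a jstar⌋ + 1 ∧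
      (∀ j, j ≠ jstar →
        ((Finset.univ.filter fun i => π i = j).card : ℤ) = ⌊a j⌋ ∨
        ((Finset.univ.filter fun i => π i = j).card : ℤ) = ⌈a j⌉) := by
  intro jstar
  classical
  obtain ⟨m, rfl⟩ : ∃ m, n = m + 1 := ⟨n - 1, (Nat.succ_pred_eq_of_pos hn).symm⟩
  -- floor and capacity functions
  set f : Fin q → ℕ := fun j => (⌊a j⌋).toNat with hfdef
  set cap : Fin q → ℕ := fun j => if j = jstar then f j else (⌈a j⌉).toNat with hcapdef
  have hfZ : ∀ j, (f j : ℤ) = ⌊a j⌋ := fun j =>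
    Int.toNat_of_nonneg (Int.floor_nonneg.2 (ha j))
  have hfle : ∀ j, (f j : ℝ) ≤ a j := fun j => by
    have := Int.floor_le (a j)
    rw [← hfZ j] at this; exact_mod_cast this
  have hcZ : ∀ j, ((⌈a j⌉.toNat : ℤ)) = ⌈a j⌉ := fun j =>
    Int.toNat_of_nonneg (Int.ceil_nonneg (ha j))
  have hcge : ∀ j, a j ≤ ((⌈a j⌉.toNat : ℕ) : ℝ) := fun j => by
    have := Int.le_ceil (a j)
    rw [← hcZ j] at this; exact_mod_cast this
  have hfcap : ∀ j, f j ≤ cap j := by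
    intro j
    simp only [hcapdef]
    split_ifs with h
    · exact le_rfl
    · have h1 : ⌊a j⌋ ≤ ⌈a j⌉ := Int.floor_le_ceil _
      have h2 := hfZ j; have h3 := hcZ j; omega
  have hcaple : ∀ j, cap j ≤ f j + 1 := by
    intro j
    simp only [hcapdef]
    split_ifs with h
    · omega
    · have h1 : ⌈a j⌉ ≤ ⌊a j⌋ + 1 := Int.ceil_le_floor_add_one _
      have h2 := hfZ j; have h3 := hcZ j; omega
  have hcapgea : ∀ j, j ≠ jstar → a j ≤ (cap j : ℝ) := by
    intro j hj
    simp only [hcapdef, if_neg hj]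
    exact hcge j
  have hcapgt : ∀ j, a j - 1 < (cap j : ℝ) := by
    intro j
    by_cases h : j = jstar
    · have h0 : cap j = f j := by simp only [hcapdef, if_pos h]
      rw [h0]
      have h1 : a j < (f j : ℝ) + 1 := by
        have := Int.lt_floor_add_one (a j)
        rw [← hfZ j] at this; exact_mod_cast this
      linarith
    · linarith [hcapgea j h]
  -- the key strict inequality
  have KEY : ∀ J : Finset (Fin q), (∑ j ∈ J, a j) - 1 < ∑ j ∈ J, (cap j : ℝ) := by
    intro J
    by_cases hmem : jstar ∈ J
    · rw [← Finset.sum_erase_add _ _ hmem, ← Finset.sum_erase_add _ (fun j => (cap j : ℝ)) hmem]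
      have h1 : ∑ j ∈ J.erase jstar, a j ≤ ∑ j ∈ J.erase jstar, (cap j : ℝ) :=
        Finset.sum_le_sum fun j hj => hcapgea j (Finset.ne_of_mem_erase hj)
      have h2 := hcapgt jstar
      linarith
    · have h1 : ∑ j ∈ J, a j ≤ ∑ j ∈ J, (cap j : ℝ) :=
        Finset.sum_le_sum fun j hj => hcapgea j (fun h => hmem (h ▸ hj))
      linarith
  set M : ℕ := ∑ j, cap j with hMdef
  have hsuma : ∑ j, a j = (m : ℝ) := by rw [hasum]; push_cast; ring
  have hmM : m ≤ M := by
    have h1 := KEY Finset.univ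
    rw [hsuma] at h1
    have h2 : ((M : ℕ) : ℝ) = ∑ j, (cap j : ℝ) := by rw [hMdef]; push_cast; rfl
    have h3 : (m : ℝ) < (M : ℝ) + 1 := by rw [h2]; linarith
    exact_mod_cast Nat.lt_succ_iff.mp (by exact_mod_cast h3)
  set D : ℕ := M - m with hDdef
  have hDM : m + D = M := by omega
  -- Hall setup
  set t : (Fin (m + 1 - 1) ⊕ Fin D) → Finset (Σ j : Fin q, Fin (cap j)) :=
    Sum.elim (fun i => Finset.univ.filter fun s => 0 < w i s.1)
      (fun _ => Finset.univ.filter fun s => f s.1 ≤ (s.2 : ℕ)) with htdef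
  have hall : ∀ S : Finset (Fin (m + 1 - 1) ⊕ Fin D), S.card ≤ (S.biUnion t).card := by
    intro S
    set Sr := S.toLeft with hSrdef
    set Sd := S.toRight with hSddef
    set J : Finset (Fin q) := Finset.univ.filter fun j => ∃ i ∈ Sr, 0 < w i j with hJdef
    have hScard : Sr.card + Sd.card = S.card := Finset.card_toLeft_add_card_toRight (u := S)
    -- fractional bound on |Sr|
    have hSrcard : (Sr.card : ℝ) ≤ ∑ j ∈ J, a j := by
      have h1 : (Sr.card : ℝ) = ∑ i ∈ Sr, ∑ j, w i j := by
        rw [Finset.sum_congr rfl (fun i _ => hrow i)]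
        simp
      rw [h1, Finset.sum_comm]
      have h2 : ∑ j, ∑ i ∈ Sr, w i j = ∑ j ∈ J, ∑ i ∈ Sr, w i j := by
        refine (Finset.sum_subset (Finset.subset_univ J) ?_).symm
        intro j _ hj
        refine Finset.sum_eq_zero fun i hi => ?_
        by_contra hne
        have hpos : 0 < w i j := lt_of_le_of_ne (hw0 i j) (Ne.symm hne)
        exact hj (Finset.mem_filter.2 ⟨Finset.mem_univ _, ⟨i, hi, hpos⟩⟩)
      rw [h2]
      refine Finset.sum_le_sum fun j _ => ?_
      rw [← hcol j]
      exact Finset.sum_le_sum_of_subset_of_nonneg (Finset.subset_univ _)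
        (fun i _ _ => hw0 i j)
    -- membership of column-J slots in the biUnion
    have hJsub : ∀ s : (Σ j : Fin q, Fin (cap j)), s.1 ∈ J → s ∈ S.biUnion t := by
      intro s hs
      rw [hJdef, Finset.mem_filter] at hs
      obtain ⟨-, i, hiSr, hwi⟩ := hs
      refine Finset.mem_biUnion.2 ⟨Sum.inl i, Finset.mem_toLeft.1 hiSr, ?_⟩
      exact Finset.mem_filter.2 ⟨Finset.mem_univ _, hwi⟩
    rcases Sd.eq_empty_or_nonempty with hSd | ⟨d0, hd0⟩
    · -- no dummy vertices in S
      have hU1 : J.sigma (fun j => (Finset.univ : Finset (Fin (cap j)))) ⊆ S.biUnion t := by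
        intro s hs
        exact hJsub s (Finset.mem_sigma.1 hs).1
      have hcardU1 : (J.sigma fun j => (Finset.univ : Finset (Fin (cap j)))).card
          = ∑ j ∈ J, cap j := by
        rw [Finset.card_sigma]; simp
      have hle : Sr.card ≤ ∑ j ∈ J, cap j := by
        have h1 := KEY J
        have h2 : ((∑ j ∈ J, cap j : ℕ) : ℝ) = ∑ j ∈ J, (cap j : ℝ) := by push_cast; rfl
        have h3 : (Sr.card : ℝ) < ((∑ j ∈ J, cap j : ℕ) : ℝ) + 1 := by rw [h2]; linarith
        exact_mod_cast Nat.lt_succ_iff.mp (by exact_mod_cast h3)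
      calc S.card = Sr.card := by rw [← hScard, hSd]; simp
        _ ≤ (J.sigma fun j => (Finset.univ : Finset (Fin (cap j)))).card := by
            rw [hcardU1]; exact hle
        _ ≤ (S.biUnion t).card := Finset.card_le_card hU1
    · -- some dummy vertex in S
      set U : Finset (Σ j : Fin q, Fin (cap j)) :=
        Finset.univ.sigma (fun j => if j ∈ J then (Finset.univ : Finset (Fin (cap j)))
          else Finset.univ.filter fun k => f j ≤ (k : ℕ)) with hUdef
      have hUsub : U ⊆ S.biUnion t := by
        intro s hs
        rw [hUdef, Finset.mem_sigma] at hs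
        by_cases hsJ : s.1 ∈ J
        · exact hJsub s hsJ
        · rw [if_neg hsJ, Finset.mem_filter] at hs
          refine Finset.mem_biUnion.2 ⟨Sum.inr d0, Finset.mem_toRight.1 hd0, ?_⟩
          exact Finset.mem_filter.2 ⟨Finset.mem_univ _, hs.2.2⟩
      have hcardU : U.card = ∑ j, (if j ∈ J then cap j else cap j - f j) := by
        rw [hUdef, Finset.card_sigma]
        refine Finset.sum_congr rfl fun j _ => ?_
        split_ifs with h
        · simp
        · exact stmt2_aux_card _ _
      set T : ℕ := ∑ j, (if j ∈ J then 0 else f j) with hTdef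
      have hUT : U.card + T = M := by
        rw [hcardU, hTdef, ← Finset.sum_add_distrib, hMdef]
        refine Finset.sum_congr rfl fun j _ => ?_
        split_ifs with h
        · omega
        · exact Nat.sub_add_cancel (hfcap j)
      have hSrT : Sr.card + T ≤ m := by
        have h1 : ((Sr.card + T : ℕ) : ℝ) ≤ (m : ℝ) := by
          push_cast
          have h2 : (T : ℝ) = ∑ j, (if j ∈ J then (0:ℝ) else f j) := by
            rw [hTdef]; push_cast [apply_ite (fun x : ℕ => (x : ℝ))]; rfl
          have h3 : (T : ℝ) ≤ ∑ j, (if j ∈ J then (0:ℝ) else a j) := by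
            rw [h2]
            refine Finset.sum_le_sum fun j _ => ?_
            split_ifs
            · exact le_rfl
            · exact hfle j
          have h4 : ∑ j ∈ J, a j = ∑ j, (if j ∈ J then a j else 0) := by
            rw [Finset.sum_ite_mem, Finset.univ_inter]
          have h5 : ∑ j, (if j ∈ J then a j else (0:ℝ)) + ∑ j, (if j ∈ J then (0:ℝ) else a j)
              = ∑ j, a j := by
            rw [← Finset.sum_add_distrib]
            refine Finset.sum_congr rfl fun j _ => ?_
            split_ifs <;> ring
          have h6 := hSrcard
          rw [h4] at h6
          rw [← hsuma, ← h5]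
          linarith
        exact_mod_cast h1
      have hSdD : Sd.card ≤ D := by
        calc Sd.card ≤ (Finset.univ : Finset (Fin D)).card := Finset.card_le_univ Sd
          _ = D := by simp
      have := Finset.card_le_card hUsub
      omega
  -- apply Hall's theorem
  obtain ⟨g, hginj, hgmem⟩ :=
    (Finset.all_card_le_biUnion_card_iff_exists_injective t).mp hall
  have hgbij : Function.Bijective g := by
    refine (Fintype.bijective_iff_injective_and_card g).2 ⟨hginj, ?_⟩
    rw [Fintype.card_sum, Fintype.card_sigma]
    simp only [Fintype.card_fin]
    omega
  -- column counts
  set cj : Fin q → ℕ := fun j => ∑ i : Fin (m + 1 - 1), (if (g (Sum.inl i)).1 = j then 1 else 0)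
    with hcjdef
  set dj : Fin q → ℕ := fun j => ∑ d : Fin D, (if (g (Sum.inr d)).1 = j then 1 else 0)
    with hdjdef
  have hsplit : ∀ j, cj j + dj j = cap j := by
    intro j
    have h1 : (∑ x : Fin (m + 1 - 1) ⊕ Fin D, if (g x).1 = j then 1 else 0) = cj j + dj j := by
      rw [Fintype.sum_sum_type]
    rw [← h1]
    rw [Fintype.sum_bijective g hgbij _ (fun s => if s.1 = j then 1 else 0) (fun x => rfl)]
    rw [← Finset.univ_sigma_univ, Finset.sum_sigma]
    have h2 : ∀ j' : Fin q, (∑ k : Fin (cap j'), if (⟨j', k⟩ : Σ j : Fin q, Fin (cap j)).1 = j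
        then (1:ℕ) else 0) = if j' = j then cap j' else 0 := by
      intro j'
      split_ifs with h <;> simp [h]
    rw [Finset.sum_congr rfl fun j' _ => h2 j']
    simp
  have hdj : ∀ j, dj j ≤ cap j - f j := by
    intro j
    have h1 : dj j = (Finset.univ.filter fun d : Fin D => (g (Sum.inr d)).1 = j).card := by
      rw [hdjdef, Finset.card_filter]
    rw [h1]
    have h2 : (({j} : Finset (Fin q)).sigma fun j' =>
        Finset.univ.filter fun k : Fin (cap j') => f j' ≤ (k : ℕ)).card = cap j - f j := by
      rw [Finset.card_sigma, Finset.sum_singleton, stmt2_aux_card]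
    rw [← h2]
    refine Finset.card_le_card_of_injOn (fun d => g (Sum.inr d)) ?_ ?_
    · intro d hd
      rw [Finset.mem_coe, Finset.mem_filter] at hd
      have h3 : f ((g (Sum.inr d)).1) ≤ ((g (Sum.inr d)).2 : ℕ) :=
        (Finset.mem_filter.1 (hgmem (Sum.inr d))).2
      exact Finset.mem_coe.2 (Finset.mem_sigma.2 ⟨by simp [hd.2], Finset.mem_filter.2 ⟨Finset.mem_univ _, h3⟩⟩)
    · intro d _ d' _ h
      exact Sum.inr_injective (hginj h)
  have hbounds : ∀ j, f j ≤ cj j ∧ cj j ≤ cap j := by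
    intro j
    have h1 := hsplit j
    have h2 := hdj j
    have h3 := hfcap j
    omega
  -- define the assignment
  set σ : Fin (m + 1 - 1) → Fin q := fun i => (g (Sum.inl i)).1 with hσdef
  set π : Fin (m + 1) → Fin q := Fin.snoc σ jstar with hπdef
  have hπlast : π ⟨m + 1 - 1, Nat.sub_lt hn one_pos⟩ = jstar := by
    have h1 : (⟨m + 1 - 1, Nat.sub_lt hn one_pos⟩ : Fin (m + 1)) = Fin.last m := rfl
    rw [h1, hπdef, Fin.snoc_last]
  have hπcast : ∀ i : Fin (m + 1 - 1), π (Fin.castLE (Nat.sub_le (m+1) 1) i) = σ i := by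
    intro i
    have h1 : Fin.castLE (Nat.sub_le (m+1) 1) i = Fin.castSucc (⟨i.1, i.2⟩ : Fin m) := rfl
    rw [h1, hπdef, Fin.snoc_castSucc]
    rfl
  have hcount : ∀ j, (Finset.univ.filter fun i : Fin (m + 1) => π i = j).card
      = cj j + (if jstar = j then 1 else 0) := by
    intro j
    rw [Finset.card_filter, Fin.sum_univ_castSucc]
    congr 1
    · rw [hcjdef]
      refine Finset.sum_congr rfl fun i _ => ?_
      rw [hπdef, Fin.snoc_castSucc]
    · rw [hπdef, Fin.snoc_last]
  refine ⟨π, hπlast, ?_, ?_, ?_⟩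
  · intro i
    rw [hπcast i]
    by_contra hE
    have h1 := hwE i (σ i) hE
    have h2 : 0 < w i ((g (Sum.inl i)).1) := (Finset.mem_filter.1 (hgmem (Sum.inl i))).2
    rw [hσdef] at h1
    exact absurd h1 (ne_of_gt h2)
  · rw [hcount jstar, if_pos rfl]
    have h1 := hbounds jstar
    have h2 : cap jstar = f jstar := by simp [hcapdef]
    have h3 : cj jstar = f jstar := by omega
    rw [h3]
    push_cast [hfZ jstar]
    ring
  · intro j hj
    rw [hcount j, if_neg (Ne.symm hj)]
    have h1 := hbounds j
    have h2 : cap j = ⌈a j⌉.toNat := by simp [hcapdef, hj]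
    have h3 := hcaple j
    have h4 : cj j = f j ∨ cj j = ⌈a j⌉.toNat := by omega
    rcases h4 with h4 | h4
    · left; rw [h4]; push_cast [hfZ j]; ring
    · right; rw [h4]; push_cast [hcZ j]; ring
end

section
/- Let n ≥ 2 be an integer, δ = 1/(6n²), ω = (1/3, 1/3, 1/3), and ω^δ = (1/3 − δ, 1/3 + δ/2, 1/3 + δ/2). Let p, q, r be three points of the standard simplex Δ² all of whose coordinates are integer multiples of 1/(n−1). If ω^δ belongs to the convex hull of {p, q, r}, then ω also belongs to the convex hull of {p, q, r}. -/
namespace Stmt8Proof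

noncomputable def det3 (x y z : Fin 3 → ℝ) : ℝ :=
  x 0 * (y 1 * z 2 - y 2 * z 1) - x 1 * (y 0 * z 2 - y 2 * z 0) + x 2 * (y 0 * z 1 - y 1 * z 0)

lemma lat_cases {j : ℤ} {M A : ℝ} (hM : 0 < M) (h : A = j / M) : A = 0 ∨ 1 / M ≤ |A| := by
  rcases eq_or_ne j 0 with hj | hj
  · left; simp [h, hj]
  · right
    have : (1 : ℝ) ≤ |(j : ℝ)| := by exact_mod_cast Int.one_le_abs hj
    rw [h, abs_div, abs_of_pos hM, div_le_div_iff₀ hM hM]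
    nlinarith
lemma sign_lemma {a D A E M : ℝ} (ha : 0 ≤ a) (hD : D ≠ 0) (heq : a * D = A - E)
    (hE : |E| < 1 / M) (hM : 0 < M) (hlat : A = 0 ∨ 1 / M ≤ |A|) : 0 ≤ A / D := by
  rcases hlat with h0 | hA
  · simp [h0]
  rcases abs_lt.mp hE with ⟨hE1, hE2⟩
  rcases le_or_gt 0 A with hA0 | hA0
  · rw [abs_of_nonneg hA0] at hA
    have hMpos : (0:ℝ) < 1 / M := by positivity
    have : 0 < a * D := by rw [heq]; linarith
    have hDpos : 0 < D := by
      rcases ha.lt_or_eq with h | h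
      · nlinarith
      · exfalso; rw [← h] at this; simp at this
    positivity
  · have hAabs : 1 / M ≤ -A := by rwa [abs_of_neg hA0] at hA
    have : a * D < 0 := by rw [heq]; linarith
    have hDneg : D < 0 := by nlinarith
    exact le_of_lt (div_pos_of_neg_of_neg hA0 hDneg)

lemma exists_coeffs {p q r x : Fin 3 → ℝ} (h : x ∈ convexHull ℝ ({p, q, r} : Set (Fin 3 → ℝ))) :
    ∃ a b c : ℝ, 0 ≤ a ∧ 0 ≤ b ∧ 0 ≤ c ∧ a + b + c = 1 ∧
      ∀ j, a * p j + b * q j + c * r j = x j := by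
  rw [show ({p, q, r} : Set (Fin 3 → ℝ)) = insert p {q, r} from rfl,
    convexHull_insert ⟨q, by simp⟩, convexHull_pair] at h
  rw [mem_convexJoin] at h
  obtain ⟨p', hp', z, hz, hx⟩ := h
  rw [Set.mem_singleton_iff] at hp'
  subst hp'
  obtain ⟨b1, b2, hb1, hb2, hbsum, hbz⟩ := hz
  obtain ⟨a1, a2, ha1, ha2, hasum, hax⟩ := hx
  subst hbz
  refine ⟨a1, a2 * b1, a2 * b2, ha1, by positivity, by positivity, by nlinarith, fun j => ?_⟩
  have h1 := congrFun hax j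
  simp only [Pi.add_apply, Pi.smul_apply, smul_eq_mul] at h1
  linear_combination h1

lemma mem_hull_of_coeffs {p q r : Fin 3 → ℝ} {a b c : ℝ} (ha : 0 ≤ a) (hb : 0 ≤ b) (hc : 0 ≤ c)
    (hsum : a + b + c = 1) (h : ∀ j, a * p j + b * q j + c * r j = 1 / 3) :
    (fun _ => 1 / 3 : Fin 3 → ℝ) ∈ convexHull ℝ ({p, q, r} : Set (Fin 3 → ℝ)) := by
  have := Finset.centerMass_mem_convexHull (t := (Finset.univ : Finset (Fin 3)))
    (w := ![a, b, c]) (z := ![p, q, r]) (s := ({p, q, r} : Set (Fin 3 → ℝ)))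
    (by intro i _; fin_cases i <;> simpa) (by simp [Fin.sum_univ_three]; linarith)
    (by intro i _; fin_cases i <;> simp)
  convert this using 1
  funext j
  simp [Finset.centerMass, Fin.sum_univ_three, hsum]
  rw [h j]; norm_num

lemma lat_cases' {j k : ℤ} {t : ℝ} (hk : k ≠ 0) (h : t = (j : ℝ) / (k : ℝ)) :
    t = 0 ∨ 1 / |(k : ℝ)| ≤ |t| := by
  rcases eq_or_ne j 0 with hj | hj
  · left; simp [h, hj]
  · right
    have h1 : (1 : ℝ) ≤ |(j : ℝ)| := by exact_mod_cast Int.one_le_abs hj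
    have hkpos : (0 : ℝ) < |(k : ℝ)| := by
      simp only [abs_pos]; exact_mod_cast hk
    rw [h, abs_div, div_le_div_iff₀ hkpos hkpos]
    nlinarith

set_option maxHeartbeats 1600000 in
lemma seg_lemma (n : ℕ) (hn : 2 ≤ n) (x y : Fin 3 → ℝ)
    (hxs : x 0 + x 1 + x 2 = 1) (hys : y 0 + y 1 + y 2 = 1)
    (hx : ∀ j : Fin 3, ∃ ℓ : ℕ, ℓ ≤ n - 1 ∧ x j = (ℓ : ℝ) / ((n : ℝ) - 1))
    (hy : ∀ j : Fin 3, ∃ ℓ : ℕ, ℓ ≤ n - 1 ∧ y j = (ℓ : ℝ) / ((n : ℝ) - 1))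
    (hw : ![1 / 3 - 1 / (6 * (n : ℝ) ^ 2),
            1 / 3 + 1 / (6 * (n : ℝ) ^ 2) / 2,
            1 / 3 + 1 / (6 * (n : ℝ) ^ 2) / 2] ∈ segment ℝ x y) :
    (fun _ => 1 / 3 : Fin 3 → ℝ) ∈ segment ℝ x y := by
  have hn' : (2 : ℝ) ≤ (n : ℝ) := by exact_mod_cast hn
  set N : ℝ := (n : ℝ) - 1 with hNdef
  have hN1 : 1 ≤ N := by simp [hNdef]; linarith
  have hN0 : N ≠ 0 := by linarith
  have hnn : (0 : ℝ) < (n : ℝ) ^ 2 := by positivity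
  set dd : ℝ := 1 / (6 * (n : ℝ) ^ 2) with hdd
  have hdd0 : 0 < dd := by positivity
  choose Lx hLxle hLx using hx
  choose Ly hLyle hLy using hy
  have hLxle' : ∀ j, (Lx j : ℝ) ≤ N := by
    intro j
    have := hLxle j
    have : (Lx j : ℝ) ≤ ((n - 1 : ℕ) : ℝ) := by exact_mod_cast this
    rwa [Nat.cast_sub (by omega), Nat.cast_one] at this
  have hLyle' : ∀ j, (Ly j : ℝ) ≤ N := by
    intro j
    have := hLyle j
    have : (Ly j : ℝ) ≤ ((n - 1 : ℕ) : ℝ) := by exact_mod_cast this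
    rwa [Nat.cast_sub (by omega), Nat.cast_one] at this
  obtain ⟨s1, s2, hs1, hs2, hssum, hwx⟩ := hw
  have hwj : ∀ j, x j + s2 * (y j - x j) = ![1 / 3 - dd, 1 / 3 + dd / 2, 1 / 3 + dd / 2] j := by
    intro j
    have h1 := congrFun hwx j
    simp only [Pi.add_apply, Pi.smul_apply, smul_eq_mul] at h1
    rw [show s1 = 1 - s2 by linarith] at h1
    linear_combination h1
  have hw0 : x 0 + s2 * (y 0 - x 0) = 1 / 3 - dd := by simpa using hwj 0
  have hw1 : x 1 + s2 * (y 1 - x 1) = 1 / 3 + dd / 2 := by simpa using hwj 1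
  have hw2 : x 2 + s2 * (y 2 - x 2) = 1 / 3 + dd / 2 := by simpa using hwj 2
  by_cases hxy : ∀ j, y j = x j
  · exfalso
    have he : (Lx 0 : ℝ) / N = 1 / 3 - dd := by
      rw [← hLx 0]
      have h1 := hw0
      rw [hxy 0] at h1
      linarith
    have he2 : (18 : ℝ) * (n : ℝ) ^ 2 * (Lx 0 : ℝ) = ((n : ℝ) - 1) * (6 * (n : ℝ) ^ 2 - 3) := by
      rw [hNdef, hdd] at he
      have h2 : (n : ℝ) - 1 ≠ 0 := by rwa [hNdef] at hN0
      have h3 : (6 : ℝ) * (n : ℝ) ^ 2 ≠ 0 := by positivity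
      field_simp at he
      linarith
    have he3 : (18 : ℤ) * (n : ℤ) ^ 2 * (Lx 0 : ℤ) = ((n : ℤ) - 1) * (6 * (n : ℤ) ^ 2 - 3) := by
      exact_mod_cast he2
    have hdvd : ((n : ℤ)) ^ 2 ∣ 3 * (n : ℤ) - 3 :=
      ⟨6 * (n : ℤ) - 6 - 18 * (Lx 0 : ℤ), by linear_combination he3⟩
    have hpos : (0 : ℤ) < 3 * (n : ℤ) - 3 := by
      have : (2 : ℤ) ≤ (n : ℤ) := by exact_mod_cast hn
      linarith
    have hle := Int.le_of_dvd hpos hdvd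
    have h2 : (2 : ℤ) ≤ (n : ℤ) := by exact_mod_cast hn
    nlinarith [sq_nonneg ((n : ℤ) - 2)]
  · push_neg at hxy
    obtain ⟨i, hi⟩ := hxy
    set m : Fin 3 → ℤ := fun j => (Ly j : ℤ) - (Lx j : ℤ) with hmdef
    have hd : ∀ j, y j - x j = (m j : ℝ) / N := by
      intro j
      rw [hLx j, hLy j, hmdef]
      push_cast
      ring
    have hmabs : ∀ j, |(m j : ℝ)| ≤ N := by
      intro j
      rw [abs_le]
      constructor
      · rw [hmdef]; push_cast
        have := hLyle' j
        have h4 : (0 : ℝ) ≤ (Ly j : ℝ) := Nat.cast_nonneg _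
        have := hLxle' j
        linarith
      · rw [hmdef]; push_cast
        have := hLyle' j
        have h4 : (0 : ℝ) ≤ (Lx j : ℝ) := Nat.cast_nonneg _
        linarith
    have hdabs : ∀ j, |y j - x j| ≤ 1 := by
      intro j
      rw [hd j, abs_div, abs_of_pos (by linarith : (0:ℝ) < N), div_le_one (by linarith)]
      exact hmabs j
    have hsd : (y 0 - x 0) + (y 1 - x 1) + (y 2 - x 2) = 0 := by linarith
    have husum : (1/3 - x 0) + (1/3 - x 1) + (1/3 - x 2) = 0 := by linarith
    -- the "Z" quantity
    have hZval : (y 1 - x 1) * (1/3 - x 0) - (y 0 - x 0) * (1/3 - x 1)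
        = dd * ((y 1 - x 1) + (y 0 - x 0) / 2) := by
      linear_combination (y 0 - x 0) * hw1 - (y 1 - x 1) * hw0
    have hZlat : (y 1 - x 1) * (1/3 - x 0) - (y 0 - x 0) * (1/3 - x 1)
        = ((m 1 * ((n : ℤ) - 1 - 3 * (Lx 0 : ℤ)) - m 0 * ((n : ℤ) - 1 - 3 * (Lx 1 : ℤ)) : ℤ) : ℝ)
          / (3 * N ^ 2) := by
      rw [hd 0, hd 1, hLx 0, hLx 1, hNdef]
      push_cast
      have hn1 : (n : ℝ) - 1 ≠ 0 := by linarith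
      field_simp
    have hN2pos : (0 : ℝ) < 3 * N ^ 2 := by positivity
    have hZ0 : (y 1 - x 1) * (1/3 - x 0) - (y 0 - x 0) * (1/3 - x 1) = 0 := by
      rcases lat_cases hN2pos hZlat with h | h
      · exact h
      · exfalso
        rw [hZval] at h
        have hb : |dd * ((y 1 - x 1) + (y 0 - x 0) / 2)| ≤ dd * (3 / 2) := by
          rw [abs_mul, abs_of_pos hdd0]
          have h1 := abs_le.mp (hdabs 0)
          have h2 := abs_le.mp (hdabs 1)
          have h3 : |(y 1 - x 1) + (y 0 - x 0) / 2| ≤ 3 / 2 := by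
            rw [abs_le]; constructor <;> linarith
          exact mul_le_mul_of_nonneg_left h3 hdd0.le
        have hcmp : dd * (3 / 2) < 1 / (3 * N ^ 2) := by
          have he : dd * (3 / 2) = 3 / (12 * (n : ℝ) ^ 2) := by rw [hdd]; ring
          rw [he, hNdef, div_lt_div_iff₀ (by positivity) (by positivity)]
          nlinarith [hn']
        linarith
    have hcross02 : (y 2 - x 2) * (1/3 - x 0) - (y 0 - x 0) * (1/3 - x 2) = 0 := by
      linear_combination -hZ0 + (1/3 - x 0) * hsd - (y 0 - x 0) * husum
    have hcross12 : (y 2 - x 2) * (1/3 - x 1) - (y 1 - x 1) * (1/3 - x 2) = 0 := by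
      linear_combination hZ0 + (1/3 - x 1) * hsd - (y 1 - x 1) * husum
    have htri : ∀ k : Fin 3, k = 0 ∨ k = 1 ∨ k = 2 := by intro k; omega
    have e01 : (1/3 - x 1) * (y 0 - x 0) = (1/3 - x 0) * (y 1 - x 1) := by
      linear_combination -hZ0
    have e02 : (1/3 - x 2) * (y 0 - x 0) = (1/3 - x 0) * (y 2 - x 2) := by
      linear_combination -hcross02
    have e12 : (1/3 - x 2) * (y 1 - x 1) = (1/3 - x 1) * (y 2 - x 2) := by
      linear_combination -hcross12
    have hkey : ∀ j, (1/3 - x j) * (y i - x i) = (1/3 - x i) * (y j - x j) := by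
      intro j
      rcases htri i with hI | hI | hI <;> rcases htri j with hJ | hJ | hJ <;>
        subst hI <;> subst hJ
      exacts [rfl, e01, e02, e01.symm, rfl, e12, e02.symm, e12.symm, rfl]
    have hdi : y i - x i ≠ 0 := sub_ne_zero.mpr hi
    set t : ℝ := (1/3 - x i) / (y i - x i) with htdef
    have hti : t * (y i - x i) = 1/3 - x i := div_mul_cancel₀ _ hdi
    have homj : ∀ j, (1 : ℝ)/3 = x j + t * (y j - x j) := by
      intro j
      have h1 := hkey j
      rw [htdef]
      field_simp
      linear_combination 3 * h1
    have hts : (t - s2) * (y i - x i)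
        = 1/3 - (![1 / 3 - dd, 1 / 3 + dd / 2, 1 / 3 + dd / 2] : Fin 3 → ℝ) i := by
      have h1 := hwj i
      have h2 : (t - s2) * (y i - x i) = (1/3 - x i) - s2 * (y i - x i) := by
        rw [sub_mul, hti]
      rw [h2]
      linarith
    have hwabs : |(1:ℝ)/3 - (![1 / 3 - dd, 1 / 3 + dd / 2, 1 / 3 + dd / 2] : Fin 3 → ℝ) i| ≤ dd := by
      rcases htri i with hI | hI | hI <;> rw [hI] <;> simp <;> rw [abs_le] <;>
        constructor <;> linarith
    have hmi0 : m i ≠ 0 := by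
      intro h0
      apply hi
      have h1 := hd i
      rw [h0] at h1
      simp at h1
      linarith
    have hmi1 : (1:ℝ) ≤ |(m i : ℝ)| := by exact_mod_cast Int.one_le_abs hmi0
    have hNpos : (0:ℝ) < N := by linarith
    have hdiN : 1 / N ≤ |y i - x i| := by
      rw [hd i, abs_div, abs_of_pos hNpos]
      gcongr
    have htsabs : |t - s2| ≤ dd * N := by
      have h1 : |t - s2| * |y i - x i| ≤ dd := by
        rw [← abs_mul, hts, abs_sub_comm]
        rwa [abs_sub_comm] at hwabs
      have h2 : |t - s2| * (1 / N) ≤ dd :=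
        le_trans (by gcongr) h1
      rw [mul_one_div] at h2
      calc |t - s2| = |t - s2| / N * N := by field_simp
        _ ≤ dd * N := by gcongr
    have h3mi : (3 * m i : ℤ) ≠ 0 := by simpa using hmi0
    have hmiR : (m i : ℝ) ≠ 0 := Int.cast_ne_zero.mpr hmi0
    have ht_rat : t = (((n : ℤ) - 1 - 3 * (Lx i : ℤ) : ℤ) : ℝ) / ((3 * m i : ℤ) : ℝ) := by
      rw [htdef, hd i, hLx i, hNdef]
      push_cast
      have hn1 : (n : ℝ) - 1 ≠ 0 := by linarith
      field_simp
    have h3miabs : 1 / (3 * N) ≤ 1 / |((3 * m i : ℤ) : ℝ)| := by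
      apply one_div_le_one_div_of_le
      · push_cast
        rw [abs_mul]
        simp only [abs_of_pos (by norm_num : (0:ℝ) < 3)]
        nlinarith
      · push_cast
        rw [abs_mul]
        simp only [abs_of_pos (by norm_num : (0:ℝ) < 3)]
        have := hmabs i
        nlinarith
    have hcontra : ¬ (1 / (3 * N) ≤ dd * N) := by
      intro h
      have h2 : 1 / (3 * N) ≤ N / (6 * (n : ℝ) ^ 2) := by
        rw [hdd, one_div_mul_eq_div] at h
        exact h
      rw [hNdef, div_le_div_iff₀ (by positivity) (by positivity)] at h2
      nlinarith [hn']
    have h0t : 0 ≤ t := by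
      rcases lat_cases' h3mi ht_rat with h | h
      · rw [h]
      · by_contra hneg
        push_neg at hneg
        have hx1 : |t| = -t := abs_of_neg hneg
        have hx2 : -t ≤ dd * N := by
          have := abs_le.mp htsabs
          linarith [this.1]
        apply hcontra
        calc 1 / (3 * N) ≤ 1 / |((3 * m i : ℤ) : ℝ)| := h3miabs
          _ ≤ |t| := h
          _ = -t := hx1
          _ ≤ dd * N := hx2
    have ht1 : t ≤ 1 := by
      have ht1rat : t - 1 = (((n : ℤ) - 1 - 3 * (Lx i : ℤ) - 3 * m i : ℤ) : ℝ)
          / ((3 * m i : ℤ) : ℝ) := by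
        rw [ht_rat]
        push_cast
        field_simp
      by_contra hgt
      push_neg at hgt
      rcases lat_cases' h3mi ht1rat with h | h
      · linarith
      · have hx1 : |t - 1| = t - 1 := abs_of_pos (by linarith)
        have hx2 : t - 1 ≤ dd * N := by
          have := abs_le.mp htsabs
          linarith [this.2]
        apply hcontra
        calc 1 / (3 * N) ≤ 1 / |((3 * m i : ℤ) : ℝ)| := h3miabs
          _ ≤ |t - 1| := h
          _ = t - 1 := hx1
          _ ≤ dd * N := hx2
    refine ⟨1 - t, t, by linarith, h0t, by ring, ?_⟩
    funext j
    simp only [Pi.add_apply, Pi.smul_apply, smul_eq_mul]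
    linear_combination (-1 : ℝ) * homj j

end Stmt8Proof

/- **Statement 8** (Lemma: the perturbed barycenter can be replaced by the barycenter).
Let `n ≥ 2`, `δ = 1/(6n²)`, `ω = (1/3, 1/3, 1/3)`, and `ω^δ = (1/3 − δ, 1/3 + δ/2, 1/3 + δ/2)`.
Let `p, q, r` be three points of the standard simplex `Δ²` all of whose coordinates are
integer multiples of `1/(n−1)`. If `ω^δ` belongs to the convex hull of `{p, q, r}`, then so
does `ω`. -/
open Stmt8Proof in
set_option maxHeartbeats 1000000 in
/-- Lemma: the perturbed barycenter can be replaced by the barycenter.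
Let `n ≥ 2`, `δ = 1/(6n²)`, `ω = (1/3, 1/3, 1/3)`, and `ω^δ = (1/3 − δ, 1/3 + δ/2, 1/3 + δ/2)`.
Let `p, q, r` be three points of the standard simplex `Δ²` all of whose coordinates are
integer multiples of `1/(n−1)`. If `ω^δ` belongs to the convex hull of `{p, q, r}`, then so
does `ω`. -/
theorem stmt8 (n : ℕ) (hn : 2 ≤ n) (p q r : Fin 3 → ℝ)
    (hp : p ∈ stdSimplex ℝ (Fin 3)) (hq : q ∈ stdSimplex ℝ (Fin 3))
    (hr : r ∈ stdSimplex ℝ (Fin 3))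
    (hmul : ∀ x ∈ ({p, q, r} : Set (Fin 3 → ℝ)), ∀ j : Fin 3,
      ∃ ℓ : ℕ, ℓ ≤ n - 1 ∧ x j = (ℓ : ℝ) / ((n : ℝ) - 1))
    (hδ : ![1 / 3 - 1 / (6 * (n : ℝ) ^ 2),
            1 / 3 + 1 / (6 * (n : ℝ) ^ 2) / 2,
            1 / 3 + 1 / (6 * (n : ℝ) ^ 2) / 2] ∈
          convexHull ℝ ({p, q, r} : Set (Fin 3 → ℝ))) :
    (fun _ => 1 / 3 : Fin 3 → ℝ) ∈ convexHull ℝ ({p, q, r} : Set (Fin 3 → ℝ)) := by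
  have hn' : (2 : ℝ) ≤ (n : ℝ) := by exact_mod_cast hn
  have hps : p 0 + p 1 + p 2 = 1 := by
    have h := hp.2; rwa [Fin.sum_univ_three] at h
  have hqs : q 0 + q 1 + q 2 = 1 := by
    have h := hq.2; rwa [Fin.sum_univ_three] at h
  have hrs : r 0 + r 1 + r 2 = 1 := by
    have h := hr.2; rwa [Fin.sum_univ_three] at h
  have htri : ∀ k : Fin 3, k = 0 ∨ k = 1 ∨ k = 2 := by intro k; omega
  by_cases hcol : (q 0 - p 0) * (r 1 - p 1) - (q 1 - p 1) * (r 0 - p 0) = 0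
  · -- degenerate (collinear) case
    have hu : (q 0 - p 0) + (q 1 - p 1) + (q 2 - p 2) = 0 := by linarith
    have hv : (r 0 - p 0) + (r 1 - p 1) + (r 2 - p 2) = 0 := by linarith
    have f01 : (r 0 - p 0) * (q 1 - p 1) = (r 1 - p 1) * (q 0 - p 0) := by
      linear_combination -hcol
    have f02 : (r 0 - p 0) * (q 2 - p 2) = (r 2 - p 2) * (q 0 - p 0) := by
      linear_combination hcol + (r 0 - p 0) * hu - (q 0 - p 0) * hv
    have f12 : (r 1 - p 1) * (q 2 - p 2) = (r 2 - p 2) * (q 1 - p 1) := by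
      linear_combination -hcol + (r 1 - p 1) * hu - (q 1 - p 1) * hv
    have hcoll : Collinear ℝ ({p, q, r} : Set (Fin 3 → ℝ)) := by
      by_cases hqp : q = p
      · subst hqp
        have hset : ({q, q, r} : Set (Fin 3 → ℝ)) = {q, r} := by simp
        rw [hset]
        exact collinear_pair ℝ q r
      · obtain ⟨i, hi⟩ := Function.ne_iff.mp hqp
        rw [collinear_iff_of_mem (show p ∈ ({p, q, r} : Set (Fin 3 → ℝ)) by simp)]
        refine ⟨q - p, ?_⟩
        intro z hz
        have hdi : q i - p i ≠ 0 := sub_ne_zero.mpr hi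
        rcases hz with hz | hz | hz
        · exact ⟨0, by simp [hz]⟩
        · refine ⟨1, ?_⟩
          rw [hz]
          funext j
          simp
        · refine ⟨(r i - p i) / (q i - p i), ?_⟩
          have hall : ∀ j, (r j - p j) * (q i - p i) = (r i - p i) * (q j - p j) := by
            intro j
            rcases htri i with hI | hI | hI <;> rcases htri j with hJ | hJ | hJ <;>
              subst hI <;> subst hJ
            exacts [rfl, f01.symm, f02.symm, f01, rfl, f12.symm, f02, f12, rfl]
          rw [hz]
          funext j
          simp only [Pi.vadd_apply, Pi.smul_apply, Pi.sub_apply, smul_eq_mul, vadd_eq_add, Pi.add_apply]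
          have h1 := hall j
          field_simp
          linear_combination h1
    have hseg : ∀ x y : Fin 3 → ℝ, x ∈ ({p, q, r} : Set (Fin 3 → ℝ)) →
        y ∈ ({p, q, r} : Set (Fin 3 → ℝ)) →
        x 0 + x 1 + x 2 = 1 → y 0 + y 1 + y 2 = 1 →
        ({p, q, r} : Set (Fin 3 → ℝ)) ⊆ segment ℝ x y →
        (fun _ => 1 / 3 : Fin 3 → ℝ) ∈ convexHull ℝ ({p, q, r} : Set (Fin 3 → ℝ)) := by
      intro x y hxm hym hxs hys hsub
      have hhull : convexHull ℝ ({p, q, r} : Set (Fin 3 → ℝ)) ⊆ segment ℝ x y :=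
        convexHull_min hsub (convex_segment x y)
      have hw := hhull hδ
      have hres := seg_lemma n hn x y hxs hys (hmul x hxm) (hmul y hym) hw
      exact segment_subset_convexHull hxm hym hres
    rcases hcoll.wbtw_or_wbtw_or_wbtw with hb | hb | hb
    · -- q between p and r
      have hqseg : q ∈ segment ℝ p r := mem_segment_iff_wbtw.mpr hb
      refine hseg p r (by simp) (by simp) hps hrs ?_
      intro z hz
      rcases hz with hz | hz | hz
      · rw [hz]; exact left_mem_segment ℝ p r
      · rw [hz]; exact hqseg
      · rw [hz]; exact right_mem_segment ℝ p r
    · -- r between q and p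
      have hrseg : r ∈ segment ℝ q p := mem_segment_iff_wbtw.mpr hb
      refine hseg q p (by simp) (by simp) hqs hps ?_
      intro z hz
      rcases hz with hz | hz | hz
      · rw [hz]; exact right_mem_segment ℝ q p
      · rw [hz]; exact left_mem_segment ℝ q p
      · rw [hz]; exact hrseg
    · -- p between r and q
      have hpseg : p ∈ segment ℝ r q := mem_segment_iff_wbtw.mpr hb
      refine hseg r q (by simp) (by simp) hrs hqs ?_
      intro z hz
      rcases hz with hz | hz | hz
      · rw [hz]; exact hpseg
      · rw [hz]; exact right_mem_segment ℝ r q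
      · rw [hz]; exact left_mem_segment ℝ r q
  · -- main (nondegenerate) case
    set N : ℝ := (n : ℝ) - 1 with hNdef
    have hN1 : 1 ≤ N := by simp [hNdef]; linarith
    have hN0 : N ≠ 0 := by linarith
    set dd : ℝ := 1 / (6 * (n : ℝ) ^ 2) with hdd
    have hdd0 : 0 < dd := by positivity
    have hp2 : p 2 = 1 - p 0 - p 1 := by linarith
    have hq2 : q 2 = 1 - q 0 - q 1 := by linarith
    have hr2 : r 2 = 1 - r 0 - r 1 := by linarith
    have hDW : det3 p q r = (q 0 - p 0) * (r 1 - p 1) - (q 1 - p 1) * (r 0 - p 0) := by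
      simp only [det3]
      rw [hp2, hq2, hr2]
      ring
    have hD : det3 p q r ≠ 0 := by rw [hDW]; exact hcol
    -- coefficients of the perturbed barycenter
    obtain ⟨a, b, c, ha, hb, hc, habc, hco⟩ := exists_coeffs hδ
    have hw0 : a * p 0 + b * q 0 + c * r 0 = 1 / 3 - dd := by
      simpa using hco 0
    have hw1 : a * p 1 + b * q 1 + c * r 1 = 1 / 3 + dd / 2 := by
      simpa using hco 1
    have hw2 : a * p 2 + b * q 2 + c * r 2 = 1 / 3 + dd / 2 := by
      simpa using hco 2
    -- multilinearity: a * D = det3 w q r etc.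
    have s1a : a * det3 p q r
        = (1/3 - dd) * (q 1 * r 2 - q 2 * r 1) - (1/3 + dd/2) * (q 0 * r 2 - q 2 * r 0)
          + (1/3 + dd/2) * (q 0 * r 1 - q 1 * r 0) := by
      simp only [det3]
      linear_combination (q 1 * r 2 - q 2 * r 1) * hw0 - (q 0 * r 2 - q 2 * r 0) * hw1
        + (q 0 * r 1 - q 1 * r 0) * hw2
    have s1b : b * det3 p q r
        = -((1/3 - dd) * (p 1 * r 2 - p 2 * r 1)) + (1/3 + dd/2) * (p 0 * r 2 - p 2 * r 0)
          - (1/3 + dd/2) * (p 0 * r 1 - p 1 * r 0) := by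
      simp only [det3]
      linear_combination -(p 1 * r 2 - p 2 * r 1) * hw0 + (p 0 * r 2 - p 2 * r 0) * hw1
        - (p 0 * r 1 - p 1 * r 0) * hw2
    have s1c : c * det3 p q r
        = (1/3 - dd) * (p 1 * q 2 - p 2 * q 1) - (1/3 + dd/2) * (p 0 * q 2 - p 2 * q 0)
          + (1/3 + dd/2) * (p 0 * q 1 - p 1 * q 0) := by
      simp only [det3]
      linear_combination (p 1 * q 2 - p 2 * q 1) * hw0 - (p 0 * q 2 - p 2 * q 0) * hw1
        + (p 0 * q 1 - p 1 * q 0) * hw2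
    -- perturbation identities
    have s2a : a * det3 p q r
        = det3 (fun _ => 1/3) q r - dd * ((q 1 - r 1) + (q 0 - r 0) / 2) := by
      rw [s1a]
      simp only [det3]
      rw [hq2, hr2]
      ring
    have s2b : b * det3 p q r
        = det3 p (fun _ => 1/3) r - dd * (-((p 1 - r 1) + (p 0 - r 0) / 2)) := by
      rw [s1b]
      simp only [det3]
      rw [hp2, hr2]
      ring
    have s2c : c * det3 p q r
        = det3 p q (fun _ => 1/3) - dd * ((p 1 - q 1) + (p 0 - q 0) / 2) := by
      rw [s1c]
      simp only [det3]
      rw [hp2, hq2]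
      ring
    -- lattice coordinates
    choose Lp hLple hLp using hmul p (by simp)
    choose Lq hLqle hLq using hmul q (by simp)
    choose Lr hLrle hLr using hmul r (by simp)
    have hAlat : det3 (fun _ => 1/3) q r
        = ((((Lq 1 : ℤ) * (Lr 2 : ℤ) - (Lq 2 : ℤ) * (Lr 1 : ℤ))
            - ((Lq 0 : ℤ) * (Lr 2 : ℤ) - (Lq 2 : ℤ) * (Lr 0 : ℤ))
            + ((Lq 0 : ℤ) * (Lr 1 : ℤ) - (Lq 1 : ℤ) * (Lr 0 : ℤ)) : ℤ) : ℝ)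
          / (3 * N ^ 2) := by
      simp only [det3]
      rw [hLq 0, hLq 1, hLq 2, hLr 0, hLr 1, hLr 2, hNdef]
      push_cast
      field_simp
      try exact Or.inl trivial
    have hBlat : det3 p (fun _ => 1/3) r
        = (((Lp 0 : ℤ) * ((Lr 2 : ℤ) - (Lr 1 : ℤ)) - (Lp 1 : ℤ) * ((Lr 2 : ℤ) - (Lr 0 : ℤ))
            + (Lp 2 : ℤ) * ((Lr 1 : ℤ) - (Lr 0 : ℤ)) : ℤ) : ℝ) / (3 * N ^ 2) := by
      simp only [det3]
      rw [hLp 0, hLp 1, hLp 2, hLr 0, hLr 1, hLr 2, hNdef]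
      push_cast
      field_simp
      try exact Or.inl trivial
    have hClat : det3 p q (fun _ => 1/3)
        = (((Lp 0 : ℤ) * ((Lq 1 : ℤ) - (Lq 2 : ℤ)) - (Lp 1 : ℤ) * ((Lq 0 : ℤ) - (Lq 2 : ℤ))
            + (Lp 2 : ℤ) * ((Lq 0 : ℤ) - (Lq 1 : ℤ)) : ℤ) : ℝ) / (3 * N ^ 2) := by
      simp only [det3]
      rw [hLp 0, hLp 1, hLp 2, hLq 0, hLq 1, hLq 2, hNdef]
      push_cast
      field_simp
      try exact Or.inl trivial
    -- coordinate bounds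
    have hpb : ∀ j, 0 ≤ p j ∧ p j ≤ 1 := by
      intro j
      refine ⟨hp.1 j, ?_⟩
      have h0 := hp.1 0; have h1 := hp.1 1; have h2 := hp.1 2
      rcases htri j with hJ | hJ | hJ <;> subst hJ <;> linarith
    have hqb : ∀ j, 0 ≤ q j ∧ q j ≤ 1 := by
      intro j
      refine ⟨hq.1 j, ?_⟩
      have h0 := hq.1 0; have h1 := hq.1 1; have h2 := hq.1 2
      rcases htri j with hJ | hJ | hJ <;> subst hJ <;> linarith
    have hrb : ∀ j, 0 ≤ r j ∧ r j ≤ 1 := by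
      intro j
      refine ⟨hr.1 j, ?_⟩
      have h0 := hr.1 0; have h1 := hr.1 1; have h2 := hr.1 2
      rcases htri j with hJ | hJ | hJ <;> subst hJ <;> linarith
    have hN2pos : (0 : ℝ) < 3 * N ^ 2 := by positivity
    have hcmp : dd * (3 / 2) < 1 / (3 * N ^ 2) := by
      have he : dd * (3 / 2) = 3 / (12 * (n : ℝ) ^ 2) := by rw [hdd]; ring
      rw [he, hNdef, div_lt_div_iff₀ (by positivity) (by positivity)]
      nlinarith [hn']
    have hKbound : ∀ u v : ℝ, |u| ≤ 1 → |v| ≤ 1 → |dd * (u + v / 2)| < 1 / (3 * N ^ 2) := by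
      intro u v hu hv
      have h1 : |dd * (u + v / 2)| ≤ dd * (3 / 2) := by
        rw [abs_mul, abs_of_pos hdd0]
        have h2 : |u + v / 2| ≤ 3 / 2 := by
          rcases abs_le.mp hu with ⟨h3, h4⟩
          rcases abs_le.mp hv with ⟨h5, h6⟩
          rw [abs_le]; constructor <;> linarith
        exact mul_le_mul_of_nonneg_left h2 hdd0.le
      linarith
    have habs1 : ∀ u v : Fin 3 → ℝ, (∀ j, 0 ≤ u j ∧ u j ≤ 1) → (∀ j, 0 ≤ v j ∧ v j ≤ 1) →
        ∀ j, |u j - v j| ≤ 1 := by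
      intro u v hu hv j
      rcases hu j with ⟨h1, h2⟩
      rcases hv j with ⟨h3, h4⟩
      rw [abs_le]; constructor <;> linarith
    -- nonnegativity of the barycentric coordinates of ω
    have hA_nonneg : 0 ≤ det3 (fun _ => 1/3) q r / det3 p q r := by
      refine sign_lemma ha hD (by rw [s2a]) ?_ hN2pos (lat_cases hN2pos hAlat)
      exact hKbound _ _ (habs1 q r hqb hrb 1) (habs1 q r hqb hrb 0)
    have hB_nonneg : 0 ≤ det3 p (fun _ => 1/3) r / det3 p q r := by
      refine sign_lemma hb hD (by rw [s2b]) ?_ hN2pos (lat_cases hN2pos hBlat)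
      have := hKbound (-(p 1 - r 1)) (-(p 0 - r 0)) (by rw [abs_neg]; exact habs1 p r hpb hrb 1)
        (by rw [abs_neg]; exact habs1 p r hpb hrb 0)
      calc |dd * (-((p 1 - r 1) + (p 0 - r 0) / 2))| = |dd * (-(p 1 - r 1) + -(p 0 - r 0) / 2)| := by
            ring_nf
        _ < 1 / (3 * N ^ 2) := this
    have hC_nonneg : 0 ≤ det3 p q (fun _ => 1/3) / det3 p q r := by
      refine sign_lemma hc hD (by rw [s2c]) ?_ hN2pos (lat_cases hN2pos hClat)
      exact hKbound _ _ (habs1 p q hpb hqb 1) (habs1 p q hpb hqb 0)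
    -- Cramer identities
    have hsumABC : det3 (fun _ => 1/3) q r + det3 p (fun _ => 1/3) r + det3 p q (fun _ => 1/3)
        = det3 p q r := by
      simp only [det3]
      rw [hp2, hq2, hr2]
      ring
    have hcomp : ∀ j, det3 (fun _ => 1/3) q r * p j + det3 p (fun _ => 1/3) r * q j
        + det3 p q (fun _ => 1/3) * r j = det3 p q r * (1/3) := by
      intro j
      rcases htri j with hJ | hJ | hJ <;> subst hJ <;> simp only [det3] <;>
        rw [hp2, hq2, hr2] <;> ring
    -- conclude
    refine mem_hull_of_coeffs hA_nonneg hB_nonneg hC_nonneg ?_ ?_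
    · field_simp
      linear_combination hsumABC
    · intro j
      have h1 := hcomp j
      field_simp
      linear_combination 3 * h1
end

section
/- Fix an integer N ≥ 1 and the triangulation T of [0,1]² described in the context, and let t ∈ (0,1). Let f : [0,1]² → Δ² be T-piecewise affine, vertically monotone at every x = k/N (k ∈ {0,…,N}), and suppose f_1(v) ≠ t for every grid vertex v. Then for every basic square S, either no point of the boundary ∂S satisfies f_1 = t, or the set {p ∈ ∂S : f_1(p) = t} consists of exactly two points, which lie on two distinct edges of S. -/
/-- The lower-left triangle of the basic square with bottom-left corner `(k/N, l/N)`,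
cut off by the diagonal from the top-left corner to the bottom-right corner. -/
def lowerTri (N k l : ℕ) : Set (ℝ × ℝ) :=
  {p | (k : ℝ) / N ≤ p.1 ∧ (l : ℝ) / N ≤ p.2 ∧ p.1 + p.2 ≤ ((k : ℝ) + l + 1) / N}

/-- The upper-right triangle of the basic square with bottom-left corner `(k/N, l/N)`,
cut off by the diagonal from the top-left corner to the bottom-right corner. -/
def upperTri (N k l : ℕ) : Set (ℝ × ℝ) :=
  {p | p.1 ≤ ((k : ℝ) + 1) / N ∧ p.2 ≤ ((l : ℝ) + 1) / N ∧ ((k : ℝ) + l + 1) / N ≤ p.1 + p.2}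

/-- `f` is piecewise affine with respect to the triangulation `T` of `[0,1]²` obtained by
cutting each of the `N²` basic squares along the diagonal joining its top-left corner to its
bottom-right corner: `f` agrees with an affine map on each triangle of `T`. -/
def IsPWAffine (N : ℕ) (f : ℝ × ℝ → Fin 3 → ℝ) : Prop :=
  ∀ k l : ℕ, k < N → l < N →
    (∃ g : (ℝ × ℝ) →ᵃ[ℝ] (Fin 3 → ℝ), ∀ p ∈ lowerTri N k l, f p = g p) ∧
    (∃ g : (ℝ × ℝ) →ᵃ[ℝ] (Fin 3 → ℝ), ∀ p ∈ upperTri N k l, f p = g p)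

/-- The basic square with bottom-left corner `(k/N, l/N)`. -/
def basicSquare (N k l : ℕ) : Set (ℝ × ℝ) :=
  Set.Icc ((k : ℝ) / N) (((k : ℝ) + 1) / N) ×ˢ Set.Icc ((l : ℝ) / N) (((l : ℝ) + 1) / N)

/-- The four edges (sides) of the basic square with bottom-left corner `(k/N, l/N)`:
bottom, top, left, right. -/
def squareEdge (N k l : ℕ) : Fin 4 → Set (ℝ × ℝ) :=
  ![Set.Icc ((k : ℝ) / N) (((k : ℝ) + 1) / N) ×ˢ ({(l : ℝ) / N} : Set ℝ),
    Set.Icc ((k : ℝ) / N) (((k : ℝ) + 1) / N) ×ˢ ({((l : ℝ) + 1) / N} : Set ℝ),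
    ({(k : ℝ) / N} : Set ℝ) ×ˢ Set.Icc ((l : ℝ) / N) (((l : ℝ) + 1) / N),
    ({((k : ℝ) + 1) / N} : Set ℝ) ×ˢ Set.Icc ((l : ℝ) / N) (((l : ℝ) + 1) / N)]

private lemma seg_level (a b A m t : ℝ) (hab : a < b)
    (hA : A ≠ t) (hB : A + (b - a) * m ≠ t) :
    (¬ (A - t) * (A + (b - a) * m - t) < 0 → ∀ x ∈ Set.Icc a b, A + (x - a) * m ≠ t) ∧
    ((A - t) * (A + (b - a) * m - t) < 0 →
      ∃ x ∈ Set.Ioo a b, ∀ x' ∈ Set.Icc a b, (A + (x' - a) * m = t ↔ x' = x)) := by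
  constructor
  · intro hpos x hx hxt
    have e1 : A - t = -((x - a) * m) := by linarith
    have e2 : A + (b - a) * m - t = (b - x) * m := by linear_combination hxt
    have h1 : (A - t) * (A + (b - a) * m - t) ≤ 0 := by
      rw [e1, e2]
      nlinarith [mul_nonneg (mul_nonneg (sub_nonneg.2 hx.1) (sub_nonneg.2 hx.2)) (sq_nonneg m)]
    have h2 : (A - t) * (A + (b - a) * m - t) ≠ 0 :=
      mul_ne_zero (sub_ne_zero.2 hA) (sub_ne_zero.2 hB)
    exact hpos (lt_of_le_of_ne h1 h2)
  · intro hneg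
    have hm : m ≠ 0 := by
      rintro rfl
      nlinarith [sq_nonneg (A - t)]
    have hba : 0 < b - a := by linarith
    refine ⟨a + (t - A) / m, ⟨?_, ?_⟩, ?_⟩
    · rcases lt_or_gt_of_ne hm with hm' | hm'
      · have : 0 < (t - A) / m := by
          apply div_pos_of_neg_of_neg _ hm'
          nlinarith [mul_neg_of_pos_of_neg hba hm']
        linarith
      · have : 0 < (t - A) / m := by
          apply div_pos _ hm'
          nlinarith [mul_pos hba hm']
        linarith
    · rcases lt_or_gt_of_ne hm with hm' | hm'
      · have : (t - A) / m < b - a := by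
          rw [div_lt_iff_of_neg hm']
          nlinarith [mul_neg_of_pos_of_neg hba hm']
        linarith
      · have : (t - A) / m < b - a := by
          rw [div_lt_iff₀ hm']
          nlinarith [mul_pos hba hm']
        linarith
    · intro x' _
      constructor
      · intro h
        field_simp
        linear_combination h
      · rintro rfl
        field_simp
        ring

private lemma affine_line (g : (ℝ × ℝ) →ᵃ[ℝ] (Fin 3 → ℝ)) (p v : ℝ × ℝ) (s : ℝ) :
    g (p + s • v) 0 = g p 0 + s * g.linear v 0 := by
  have h : g (s • v +ᵥ p) = g.linear (s • v) +ᵥ g p := g.map_vadd p (s • v)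
  rw [add_comm p (s • v)]
  rw [show s • v +ᵥ p = s • v + p from rfl] at h
  rw [h]
  simp [Pi.add_apply, Pi.smul_apply, smul_eq_mul]
  ring

/-- Lemma: the level set `f₁ = t` meets the boundary of a basic square in
zero or exactly two points. Fix `N ≥ 1`, `t ∈ (0,1)`, and a `T`-piecewise affine map
`f : [0,1]² → Δ²` vertically monotone at every `x = k/N` with `f₁(v) ≠ t` at every grid
vertex `v`. Then for every basic square `S`, either no point of `∂S` satisfies `f₁ = t`, or
`{p ∈ ∂S : f₁(p) = t}` consists of exactly two points, lying on two distinct edges of `S`. -/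
theorem stmt10 (N : ℕ) (hN : 1 ≤ N) (t : ℝ) (ht : t ∈ Set.Ioo (0 : ℝ) 1)
    (f : ℝ × ℝ → Fin 3 → ℝ)
    (hpa : IsPWAffine N f)
    (hmem : ∀ p : ℝ × ℝ, p ∈ Set.Icc (0 : ℝ) 1 ×ˢ Set.Icc (0 : ℝ) 1 →
      f p ∈ stdSimplex ℝ (Fin 3))
    (hmono : ∀ k : ℕ, k ≤ N → ∀ y y' : ℝ, 0 ≤ y → y ≤ y' → y' ≤ 1 →
      f ((k : ℝ) / N, y) 0 ≤ f ((k : ℝ) / N, y') 0)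
    (hvne : ∀ k l : ℕ, k ≤ N → l ≤ N → f ((k : ℝ) / N, (l : ℝ) / N) 0 ≠ t)
    (k l : ℕ) (hk : k < N) (hl : l < N) :
    {p ∈ frontier (basicSquare N k l) | f p 0 = t} = ∅ ∨
    ∃ p₁ p₂ : ℝ × ℝ, p₁ ≠ p₂ ∧
      {p ∈ frontier (basicSquare N k l) | f p 0 = t} = {p₁, p₂} ∧
      ∃ e₁ e₂ : Fin 4, e₁ ≠ e₂ ∧ p₁ ∈ squareEdge N k l e₁ ∧ p₂ ∈ squareEdge N k l e₂ := by
  have hN' : (0 : ℝ) < N := by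
    have : 0 < N := hN
    exact_mod_cast this
  set a : ℝ := (k : ℝ) / N with ha
  set b : ℝ := ((k : ℝ) + 1) / N with hb
  set c : ℝ := (l : ℝ) / N with hc
  set d : ℝ := ((l : ℝ) + 1) / N with hd
  have hab : a < b := by
    rw [ha, hb, div_lt_div_iff₀ hN' hN']
    nlinarith
  have hcd : c < d := by
    rw [hc, hd, div_lt_div_iff₀ hN' hN']
    nlinarith
  have h0c : 0 ≤ c := by rw [hc]; positivity
  have hd1 : d ≤ 1 := by
    rw [hd, div_le_one hN']
    have : (l : ℕ) + 1 ≤ N := hl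
    exact_mod_cast this
  have hbc : b + c = ((k : ℝ) + (l : ℝ) + 1) / N := by rw [hb, hc]; ring
  have had : a + d = b + c := by rw [ha, hd, hb, hc]; ring
  obtain ⟨⟨g, hg⟩, ⟨h, hh⟩⟩ := hpa k l hk hl
  have hlowmem : ∀ p : ℝ × ℝ, a ≤ p.1 → c ≤ p.2 → p.1 + p.2 ≤ b + c → p ∈ lowerTri N k l := by
    intro p h1 h2 h3
    simp only [lowerTri, Set.mem_setOf_eq]
    rw [← ha, ← hc, hbc] at *
    exact ⟨h1, h2, by linarith⟩
  have hupmem : ∀ p : ℝ × ℝ, p.1 ≤ b → p.2 ≤ d → b + c ≤ p.1 + p.2 → p ∈ upperTri N k l := by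
    intro p h1 h2 h3
    simp only [upperTri, Set.mem_setOf_eq]
    rw [← hb, ← hd, hbc] at *
    exact ⟨h1, h2, by linarith⟩
  set A : ℝ := f (a, c) 0 with hA0
  set B : ℝ := f (b, c) 0 with hB0
  set C : ℝ := f (b, d) 0 with hC0
  set D : ℝ := f (a, d) 0 with hD0
  have hAne : A ≠ t := by rw [hA0, ha, hc]; exact hvne k l hk.le hl.le
  have hBne : B ≠ t := by
    have h1 := hvne (k + 1) l (by omega) hl.le
    push_cast at h1
    rw [hB0, hb, hc]; exact h1
  have hCne : C ≠ t := by
    have h1 := hvne (k + 1) (l + 1) (by omega) (by omega)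
    push_cast at h1
    rw [hC0, hb, hd]; exact h1
  have hDne : D ≠ t := by
    have h1 := hvne k (l + 1) hk.le (by omega)
    push_cast at h1
    rw [hD0, ha, hd]; exact h1
  have hAD : A ≤ D := by
    rw [hA0, hD0, ha]
    exact hmono k hk.le c d h0c hcd.le hd1
  have hBC : B ≤ C := by
    have h1 := hmono (k + 1) (by omega) c d h0c hcd.le hd1
    push_cast at h1
    rw [hB0, hC0, hb]; exact h1
  -- edge affine formulas
  set mB : ℝ := g.linear (1, 0) 0 with hmB
  set mL : ℝ := g.linear (0, 1) 0 with hmL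
  set mT : ℝ := h.linear (1, 0) 0 with hmT
  set mR : ℝ := h.linear (0, 1) 0 with hmR
  have hcorlow : ((a, c) : ℝ × ℝ) ∈ lowerTri N k l :=
    hlowmem (a, c) le_rfl le_rfl (by dsimp only; linarith)
  have hcorlow2 : ((a, d) : ℝ × ℝ) ∈ lowerTri N k l :=
    hlowmem (a, d) le_rfl hcd.le (by dsimp only; linarith)
  have hcorup : ((b, c) : ℝ × ℝ) ∈ upperTri N k l :=
    hupmem (b, c) le_rfl hcd.le (by dsimp only; linarith)
  have hcorup2 : ((a, d) : ℝ × ℝ) ∈ upperTri N k l :=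
    hupmem (a, d) hab.le le_rfl (by dsimp only; linarith)
  have hbotf : ∀ x ∈ Set.Icc a b, f (x, c) 0 = A + (x - a) * mB := by
    intro x hx
    have hm1 : ((x, c) : ℝ × ℝ) ∈ lowerTri N k l :=
      hlowmem (x, c) hx.1 le_rfl (by dsimp only; linarith [hx.2])
    have key : ((x, c) : ℝ × ℝ) = (a, c) + (x - a) • ((1 : ℝ), (0 : ℝ)) := by
      simp [Prod.ext_iff]
    rw [hg _ hm1, hA0, hg _ hcorlow, key, affine_line]
  have hleftf : ∀ y ∈ Set.Icc c d, f (a, y) 0 = A + (y - c) * mL := by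
    intro y hy
    have hm1 : ((a, y) : ℝ × ℝ) ∈ lowerTri N k l :=
      hlowmem (a, y) le_rfl hy.1 (by dsimp only; linarith [hy.2])
    have key : ((a, y) : ℝ × ℝ) = (a, c) + (y - c) • ((0 : ℝ), (1 : ℝ)) := by
      simp [Prod.ext_iff]
    rw [hg _ hm1, hA0, hg _ hcorlow, key, affine_line]
  have htopf : ∀ x ∈ Set.Icc a b, f (x, d) 0 = D + (x - a) * mT := by
    intro x hx
    have hm1 : ((x, d) : ℝ × ℝ) ∈ upperTri N k l :=
      hupmem (x, d) hx.2 le_rfl (by dsimp only; linarith [hx.1])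
    have key : ((x, d) : ℝ × ℝ) = (a, d) + (x - a) • ((1 : ℝ), (0 : ℝ)) := by
      simp [Prod.ext_iff]
    rw [hh _ hm1, hD0, hh _ hcorup2, key, affine_line]
  have hrightf : ∀ y ∈ Set.Icc c d, f (b, y) 0 = B + (y - c) * mR := by
    intro y hy
    have hm1 : ((b, y) : ℝ × ℝ) ∈ upperTri N k l :=
      hupmem (b, y) le_rfl hy.2 (by dsimp only; linarith [hy.1])
    have key : ((b, y) : ℝ × ℝ) = (b, c) + (y - c) • ((0 : ℝ), (1 : ℝ)) := by
      simp [Prod.ext_iff]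
    rw [hh _ hm1, hB0, hh _ hcorup, key, affine_line]
  have hBeq : B = A + (b - a) * mB := by rw [hB0]; exact hbotf b ⟨hab.le, le_rfl⟩
  have hDeq : D = A + (d - c) * mL := by rw [hD0]; exact hleftf d ⟨hcd.le, le_rfl⟩
  have hCeqT : C = D + (b - a) * mT := by rw [hC0]; exact htopf b ⟨hab.le, le_rfl⟩
  have hCeqR : C = B + (d - c) * mR := by rw [hC0]; exact hrightf d ⟨hcd.le, le_rfl⟩
  -- dichotomies for each edge
  have sb := seg_level a b A mB t hab hAne (by rw [← hBeq]; exact hBne)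
  rw [← hBeq] at sb
  have st := seg_level a b D mT t hab hDne (by rw [← hCeqT]; exact hCne)
  rw [← hCeqT] at st
  have sl := seg_level c d A mL t hcd hAne (by rw [← hDeq]; exact hDne)
  rw [← hDeq] at sl
  have sr := seg_level c d B mR t hcd hBne (by rw [← hCeqR]; exact hCne)
  rw [← hCeqR] at sr
  have Ebot0 : ¬ (A - t) * (B - t) < 0 → ∀ q ∈ Set.Icc a b, f (q, c) 0 ≠ t := by
    intro h0 q hq; rw [hbotf q hq]; exact sb.1 h0 q hq
  have Ebot1 : (A - t) * (B - t) < 0 →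
      ∃ x ∈ Set.Ioo a b, ∀ x' ∈ Set.Icc a b, (f (x', c) 0 = t ↔ x' = x) := by
    intro h0; obtain ⟨x, hx, hiff⟩ := sb.2 h0
    exact ⟨x, hx, fun x' hx' => by rw [hbotf x' hx']; exact hiff x' hx'⟩
  have Etop0 : ¬ (D - t) * (C - t) < 0 → ∀ q ∈ Set.Icc a b, f (q, d) 0 ≠ t := by
    intro h0 q hq; rw [htopf q hq]; exact st.1 h0 q hq
  have Etop1 : (D - t) * (C - t) < 0 →
      ∃ x ∈ Set.Ioo a b, ∀ x' ∈ Set.Icc a b, (f (x', d) 0 = t ↔ x' = x) := by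
    intro h0; obtain ⟨x, hx, hiff⟩ := st.2 h0
    exact ⟨x, hx, fun x' hx' => by rw [htopf x' hx']; exact hiff x' hx'⟩
  have Eleft0 : ¬ (A - t) * (D - t) < 0 → ∀ q ∈ Set.Icc c d, f (a, q) 0 ≠ t := by
    intro h0 q hq; rw [hleftf q hq]; exact sl.1 h0 q hq
  have Eleft1 : (A - t) * (D - t) < 0 →
      ∃ y ∈ Set.Ioo c d, ∀ y' ∈ Set.Icc c d, (f (a, y') 0 = t ↔ y' = y) := by
    intro h0; obtain ⟨y, hy, hiff⟩ := sl.2 h0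
    exact ⟨y, hy, fun y' hy' => by rw [hleftf y' hy']; exact hiff y' hy'⟩
  have Eright0 : ¬ (B - t) * (C - t) < 0 → ∀ q ∈ Set.Icc c d, f (b, q) 0 ≠ t := by
    intro h0 q hq; rw [hrightf q hq]; exact sr.1 h0 q hq
  have Eright1 : (B - t) * (C - t) < 0 →
      ∃ y ∈ Set.Ioo c d, ∀ y' ∈ Set.Icc c d, (f (b, y') 0 = t ↔ y' = y) := by
    intro h0; obtain ⟨y, hy, hiff⟩ := sr.2 h0
    exact ⟨y, hy, fun y' hy' => by rw [hrightf y' hy']; exact hiff y' hy'⟩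
  -- frontier description
  have hfr : ∀ px py : ℝ, (((px, py) : ℝ × ℝ) ∈ frontier (basicSquare N k l)) ↔
      ((px ∈ Set.Icc a b ∧ (py = c ∨ py = d)) ∨ ((px = a ∨ px = b) ∧ py ∈ Set.Icc c d)) := by
    intro px py
    rw [show basicSquare N k l = Set.Icc a b ×ˢ Set.Icc c d by rw [basicSquare, ha, hb, hc, hd]]
    rw [frontier_prod_eq, closure_Icc, closure_Icc, frontier_Icc hab.le, frontier_Icc hcd.le]
    simp only [Set.mem_union, Set.mem_prod, Set.mem_insert_iff, Set.mem_singleton_iff]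
  have hsq : squareEdge N k l 0 = Set.Icc a b ×ˢ ({c} : Set ℝ) ∧
      squareEdge N k l 1 = Set.Icc a b ×ˢ ({d} : Set ℝ) ∧
      squareEdge N k l 2 = ({a} : Set ℝ) ×ˢ Set.Icc c d ∧
      squareEdge N k l 3 = ({b} : Set ℝ) ×ˢ Set.Icc c d := by
    refine ⟨?_, ?_, ?_, ?_⟩ <;> simp [squareEdge, ha, hb, hc, hd]
  have hPBne : (A - t) * (B - t) ≠ 0 :=
    mul_ne_zero (sub_ne_zero.2 hAne) (sub_ne_zero.2 hBne)
  have hPRne : (B - t) * (C - t) ≠ 0 :=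
    mul_ne_zero (sub_ne_zero.2 hBne) (sub_ne_zero.2 hCne)
  have hPTne : (D - t) * (C - t) ≠ 0 :=
    mul_ne_zero (sub_ne_zero.2 hDne) (sub_ne_zero.2 hCne)
  have hPLne : (A - t) * (D - t) ≠ 0 :=
    mul_ne_zero (sub_ne_zero.2 hAne) (sub_ne_zero.2 hDne)
  clear_value a b c d A B C D mB mL mT mR
  have hparity : 0 ≤ ((A - t) * (B - t)) * ((B - t) * (C - t)) *
      (((D - t) * (C - t)) * ((A - t) * (D - t))) := by
    refine le_of_le_of_eq (sq_nonneg ((A - t) * ((B - t) * ((C - t) * (D - t))))) (by ring)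
  by_cases hPB : (A - t) * (B - t) < 0 <;>
    by_cases hPR : (B - t) * (C - t) < 0 <;>
      by_cases hPT : (D - t) * (C - t) < 0 <;>
        by_cases hPL : (A - t) * (D - t) < 0
  -- case TTTT : impossible by monotonicity
  · exfalso
    have hAt : A < t := by
      by_contra hcon
      push_neg at hcon
      have h1 : 0 ≤ (A - t) * (D - t) :=
        mul_nonneg (by linarith) (by linarith)
      linarith
    have hBt : B < t := by
      by_contra hcon
      push_neg at hcon
      have h1 : 0 ≤ (B - t) * (C - t) :=
        mul_nonneg (by linarith) (by linarith)
      linarith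
    exact absurd hPB (not_lt.2 (mul_pos_of_neg_of_neg (by linarith) (by linarith)).le)
  -- case TTTF : parity
  · have hPL' : 0 < (A - t) * (D - t) := lt_of_le_of_ne (not_lt.1 hPL) (Ne.symm hPLne)
    exact absurd hparity (not_le.2 (mul_neg_of_pos_of_neg
      (mul_pos_of_neg_of_neg hPB hPR) (mul_neg_of_neg_of_pos hPT hPL')))
  -- case TTFT : parity
  · have hPT' : 0 < (D - t) * (C - t) := lt_of_le_of_ne (not_lt.1 hPT) (Ne.symm hPTne)
    exact absurd hparity (not_le.2 (mul_neg_of_pos_of_neg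
      (mul_pos_of_neg_of_neg hPB hPR) (mul_neg_of_pos_of_neg hPT' hPL)))
  -- case TTFF : bottom and right cross
  · obtain ⟨x, hx, hxu⟩ := Ebot1 hPB
    obtain ⟨y, hy, hyu⟩ := Eright1 hPR
    refine Or.inr ⟨(x, c), (b, y), ?_, ?_, 0, 3, by decide,
      (by rw [hsq.1]; exact ⟨Set.Ioo_subset_Icc_self hx, rfl⟩),
      (by rw [hsq.2.2.2]; exact ⟨rfl, Set.Ioo_subset_Icc_self hy⟩)⟩
    · intro hcon
      rw [Prod.mk.injEq] at hcon
      exact (ne_of_lt hx.2) hcon.1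
    · ext ⟨px, py⟩
      simp only [Set.mem_setOf_eq, Set.mem_insert_iff, Set.mem_singleton_iff, Prod.mk.injEq,
        hfr px py]
      constructor
      · rintro ⟨⟨hpx, hyc | hyd⟩ | ⟨hxa | hxb, hpy⟩, hft⟩
        · subst hyc; exact Or.inl ⟨(hxu px hpx).1 hft, rfl⟩
        · subst hyd; exact absurd hft (Etop0 hPT px hpx)
        · subst hxa; exact absurd hft (Eleft0 hPL py hpy)
        · subst hxb; exact Or.inr ⟨rfl, (hyu py hpy).1 hft⟩
      · rintro (⟨rfl, rfl⟩ | ⟨rfl, rfl⟩)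
        · exact ⟨Or.inl ⟨Set.Ioo_subset_Icc_self hx, Or.inl rfl⟩,
            (hxu _ (Set.Ioo_subset_Icc_self hx)).2 rfl⟩
        · exact ⟨Or.inr ⟨Or.inr rfl, Set.Ioo_subset_Icc_self hy⟩,
            (hyu _ (Set.Ioo_subset_Icc_self hy)).2 rfl⟩
  -- case TFTT : parity
  · have hPR' : 0 < (B - t) * (C - t) := lt_of_le_of_ne (not_lt.1 hPR) (Ne.symm hPRne)
    exact absurd hparity (not_le.2 (mul_neg_of_neg_of_pos
      (mul_neg_of_neg_of_pos hPB hPR') (mul_pos_of_neg_of_neg hPT hPL)))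
  -- case TFTF : bottom and top cross
  · obtain ⟨x, hx, hxu⟩ := Ebot1 hPB
    obtain ⟨x2, hx2, hx2u⟩ := Etop1 hPT
    refine Or.inr ⟨(x, c), (x2, d), ?_, ?_, 0, 1, by decide,
      (by rw [hsq.1]; exact ⟨Set.Ioo_subset_Icc_self hx, rfl⟩),
      (by rw [hsq.2.1]; exact ⟨Set.Ioo_subset_Icc_self hx2, rfl⟩)⟩
    · intro hcon
      rw [Prod.mk.injEq] at hcon
      exact (ne_of_lt hcd) hcon.2
    · ext ⟨px, py⟩
      simp only [Set.mem_setOf_eq, Set.mem_insert_iff, Set.mem_singleton_iff, Prod.mk.injEq,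
        hfr px py]
      constructor
      · rintro ⟨⟨hpx, hyc | hyd⟩ | ⟨hxa | hxb, hpy⟩, hft⟩
        · subst hyc; exact Or.inl ⟨(hxu px hpx).1 hft, rfl⟩
        · subst hyd; exact Or.inr ⟨(hx2u px hpx).1 hft, rfl⟩
        · subst hxa; exact absurd hft (Eleft0 hPL py hpy)
        · subst hxb; exact absurd hft (Eright0 hPR py hpy)
      · rintro (⟨rfl, rfl⟩ | ⟨rfl, rfl⟩)
        · exact ⟨Or.inl ⟨Set.Ioo_subset_Icc_self hx, Or.inl rfl⟩,
            (hxu _ (Set.Ioo_subset_Icc_self hx)).2 rfl⟩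
        · exact ⟨Or.inl ⟨Set.Ioo_subset_Icc_self hx2, Or.inr rfl⟩,
            (hx2u _ (Set.Ioo_subset_Icc_self hx2)).2 rfl⟩
  -- case TFFT : bottom and left cross
  · obtain ⟨x, hx, hxu⟩ := Ebot1 hPB
    obtain ⟨y, hy, hyu⟩ := Eleft1 hPL
    refine Or.inr ⟨(x, c), (a, y), ?_, ?_, 0, 2, by decide,
      (by rw [hsq.1]; exact ⟨Set.Ioo_subset_Icc_self hx, rfl⟩),
      (by rw [hsq.2.2.1]; exact ⟨rfl, Set.Ioo_subset_Icc_self hy⟩)⟩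
    · intro hcon
      rw [Prod.mk.injEq] at hcon
      exact (ne_of_gt hx.1) hcon.1
    · ext ⟨px, py⟩
      simp only [Set.mem_setOf_eq, Set.mem_insert_iff, Set.mem_singleton_iff, Prod.mk.injEq,
        hfr px py]
      constructor
      · rintro ⟨⟨hpx, hyc | hyd⟩ | ⟨hxa | hxb, hpy⟩, hft⟩
        · subst hyc; exact Or.inl ⟨(hxu px hpx).1 hft, rfl⟩
        · subst hyd; exact absurd hft (Etop0 hPT px hpx)
        · subst hxa; exact Or.inr ⟨rfl, (hyu py hpy).1 hft⟩
        · subst hxb; exact absurd hft (Eright0 hPR py hpy)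
      · rintro (⟨rfl, rfl⟩ | ⟨rfl, rfl⟩)
        · exact ⟨Or.inl ⟨Set.Ioo_subset_Icc_self hx, Or.inl rfl⟩,
            (hxu _ (Set.Ioo_subset_Icc_self hx)).2 rfl⟩
        · exact ⟨Or.inr ⟨Or.inl rfl, Set.Ioo_subset_Icc_self hy⟩,
            (hyu _ (Set.Ioo_subset_Icc_self hy)).2 rfl⟩
  -- case TFFF : parity
  · have hPR' : 0 < (B - t) * (C - t) := lt_of_le_of_ne (not_lt.1 hPR) (Ne.symm hPRne)
    have hPT' : 0 < (D - t) * (C - t) := lt_of_le_of_ne (not_lt.1 hPT) (Ne.symm hPTne)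
    have hPL' : 0 < (A - t) * (D - t) := lt_of_le_of_ne (not_lt.1 hPL) (Ne.symm hPLne)
    exact absurd hparity (not_le.2 (mul_neg_of_neg_of_pos
      (mul_neg_of_neg_of_pos hPB hPR') (mul_pos hPT' hPL')))
  -- case FTTT : parity
  · have hPB' : 0 < (A - t) * (B - t) := lt_of_le_of_ne (not_lt.1 hPB) (Ne.symm hPBne)
    exact absurd hparity (not_le.2 (mul_neg_of_neg_of_pos
      (mul_neg_of_pos_of_neg hPB' hPR) (mul_pos_of_neg_of_neg hPT hPL)))
  -- case FTTF : right and top cross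
  · obtain ⟨y, hy, hyu⟩ := Eright1 hPR
    obtain ⟨x, hx, hxu⟩ := Etop1 hPT
    refine Or.inr ⟨(b, y), (x, d), ?_, ?_, 3, 1, by decide,
      (by rw [hsq.2.2.2]; exact ⟨rfl, Set.Ioo_subset_Icc_self hy⟩),
      (by rw [hsq.2.1]; exact ⟨Set.Ioo_subset_Icc_self hx, rfl⟩)⟩
    · intro hcon
      rw [Prod.mk.injEq] at hcon
      exact (ne_of_lt hy.2) hcon.2
    · ext ⟨px, py⟩
      simp only [Set.mem_setOf_eq, Set.mem_insert_iff, Set.mem_singleton_iff, Prod.mk.injEq,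
        hfr px py]
      constructor
      · rintro ⟨⟨hpx, hyc | hyd⟩ | ⟨hxa | hxb, hpy⟩, hft⟩
        · subst hyc; exact absurd hft (Ebot0 hPB px hpx)
        · subst hyd; exact Or.inr ⟨(hxu px hpx).1 hft, rfl⟩
        · subst hxa; exact absurd hft (Eleft0 hPL py hpy)
        · subst hxb; exact Or.inl ⟨rfl, (hyu py hpy).1 hft⟩
      · rintro (⟨rfl, rfl⟩ | ⟨rfl, rfl⟩)
        · exact ⟨Or.inr ⟨Or.inr rfl, Set.Ioo_subset_Icc_self hy⟩,
            (hyu _ (Set.Ioo_subset_Icc_self hy)).2 rfl⟩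
        · exact ⟨Or.inl ⟨Set.Ioo_subset_Icc_self hx, Or.inr rfl⟩,
            (hxu _ (Set.Ioo_subset_Icc_self hx)).2 rfl⟩
  -- case FTFT : right and left cross
  · obtain ⟨y, hy, hyu⟩ := Eright1 hPR
    obtain ⟨y2, hy2, hy2u⟩ := Eleft1 hPL
    refine Or.inr ⟨(b, y), (a, y2), ?_, ?_, 3, 2, by decide,
      (by rw [hsq.2.2.2]; exact ⟨rfl, Set.Ioo_subset_Icc_self hy⟩),
      (by rw [hsq.2.2.1]; exact ⟨rfl, Set.Ioo_subset_Icc_self hy2⟩)⟩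
    · intro hcon
      rw [Prod.mk.injEq] at hcon
      exact (ne_of_lt hab) hcon.1.symm
    · ext ⟨px, py⟩
      simp only [Set.mem_setOf_eq, Set.mem_insert_iff, Set.mem_singleton_iff, Prod.mk.injEq,
        hfr px py]
      constructor
      · rintro ⟨⟨hpx, hyc | hyd⟩ | ⟨hxa | hxb, hpy⟩, hft⟩
        · subst hyc; exact absurd hft (Ebot0 hPB px hpx)
        · subst hyd; exact absurd hft (Etop0 hPT px hpx)
        · subst hxa; exact Or.inr ⟨rfl, (hy2u py hpy).1 hft⟩
        · subst hxb; exact Or.inl ⟨rfl, (hyu py hpy).1 hft⟩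
      · rintro (⟨rfl, rfl⟩ | ⟨rfl, rfl⟩)
        · exact ⟨Or.inr ⟨Or.inr rfl, Set.Ioo_subset_Icc_self hy⟩,
            (hyu _ (Set.Ioo_subset_Icc_self hy)).2 rfl⟩
        · exact ⟨Or.inr ⟨Or.inl rfl, Set.Ioo_subset_Icc_self hy2⟩,
            (hy2u _ (Set.Ioo_subset_Icc_self hy2)).2 rfl⟩
  -- case FTFF : parity
  · have hPB' : 0 < (A - t) * (B - t) := lt_of_le_of_ne (not_lt.1 hPB) (Ne.symm hPBne)
    have hPT' : 0 < (D - t) * (C - t) := lt_of_le_of_ne (not_lt.1 hPT) (Ne.symm hPTne)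
    have hPL' : 0 < (A - t) * (D - t) := lt_of_le_of_ne (not_lt.1 hPL) (Ne.symm hPLne)
    exact absurd hparity (not_le.2 (mul_neg_of_neg_of_pos
      (mul_neg_of_pos_of_neg hPB' hPR) (mul_pos hPT' hPL')))
  -- case FFTT : top and left cross
  · obtain ⟨x, hx, hxu⟩ := Etop1 hPT
    obtain ⟨y, hy, hyu⟩ := Eleft1 hPL
    refine Or.inr ⟨(x, d), (a, y), ?_, ?_, 1, 2, by decide,
      (by rw [hsq.2.1]; exact ⟨Set.Ioo_subset_Icc_self hx, rfl⟩),
      (by rw [hsq.2.2.1]; exact ⟨rfl, Set.Ioo_subset_Icc_self hy⟩)⟩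
    · intro hcon
      rw [Prod.mk.injEq] at hcon
      exact (ne_of_gt hx.1) hcon.1
    · ext ⟨px, py⟩
      simp only [Set.mem_setOf_eq, Set.mem_insert_iff, Set.mem_singleton_iff, Prod.mk.injEq,
        hfr px py]
      constructor
      · rintro ⟨⟨hpx, hyc | hyd⟩ | ⟨hxa | hxb, hpy⟩, hft⟩
        · subst hyc; exact absurd hft (Ebot0 hPB px hpx)
        · subst hyd; exact Or.inl ⟨(hxu px hpx).1 hft, rfl⟩
        · subst hxa; exact Or.inr ⟨rfl, (hyu py hpy).1 hft⟩
        · subst hxb; exact absurd hft (Eright0 hPR py hpy)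
      · rintro (⟨rfl, rfl⟩ | ⟨rfl, rfl⟩)
        · exact ⟨Or.inl ⟨Set.Ioo_subset_Icc_self hx, Or.inr rfl⟩,
            (hxu _ (Set.Ioo_subset_Icc_self hx)).2 rfl⟩
        · exact ⟨Or.inr ⟨Or.inl rfl, Set.Ioo_subset_Icc_self hy⟩,
            (hyu _ (Set.Ioo_subset_Icc_self hy)).2 rfl⟩
  -- case FFTF : parity
  · have hPB' : 0 < (A - t) * (B - t) := lt_of_le_of_ne (not_lt.1 hPB) (Ne.symm hPBne)
    have hPR' : 0 < (B - t) * (C - t) := lt_of_le_of_ne (not_lt.1 hPR) (Ne.symm hPRne)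
    have hPL' : 0 < (A - t) * (D - t) := lt_of_le_of_ne (not_lt.1 hPL) (Ne.symm hPLne)
    exact absurd hparity (not_le.2 (mul_neg_of_pos_of_neg
      (mul_pos hPB' hPR') (mul_neg_of_neg_of_pos hPT hPL')))
  -- case FFFT : parity
  · have hPB' : 0 < (A - t) * (B - t) := lt_of_le_of_ne (not_lt.1 hPB) (Ne.symm hPBne)
    have hPR' : 0 < (B - t) * (C - t) := lt_of_le_of_ne (not_lt.1 hPR) (Ne.symm hPRne)
    have hPT' : 0 < (D - t) * (C - t) := lt_of_le_of_ne (not_lt.1 hPT) (Ne.symm hPTne)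
    exact absurd hparity (not_le.2 (mul_neg_of_pos_of_neg
      (mul_pos hPB' hPR') (mul_neg_of_pos_of_neg hPT' hPL)))
  -- case FFFF : empty
  · left
    rw [Set.eq_empty_iff_forall_notMem]
    rintro ⟨px, py⟩ hp
    simp only [Set.mem_setOf_eq] at hp
    obtain ⟨hfrm, hft⟩ := hp
    rw [hfr px py] at hfrm
    rcases hfrm with ⟨hpx, hyc | hyd⟩ | ⟨hxa | hxb, hpy⟩
    · subst hyc; exact Ebot0 hPB px hpx hft
    · subst hyd; exact Etop0 hPT px hpx hft
    · subst hxa; exact Eleft0 hPL py hpy hft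
    · subst hxb; exact Eright0 hPR py hpy hft
end

section
/- Fix an integer N ≥ 1 and the triangulation T of [0,1]² described in the context, and let t ∈ (0,1). Set ω = (t, (1−t)/2, (1−t)/2). Let f : [0,1]² → Δ² be T-piecewise affine such that: f is vertically monotone at every x = k/N (k ∈ {0,…,N}); f_1(v) ≠ t for every grid vertex v; f_1(k/N, 0) < t < f_1(k/N, 1) for every k ∈ {0,…,N}; and for every y ∈ [0,1], f_1(0,y) = f_1(1,y), f_2(0,y) = f_3(1,y), and f_3(0,y) = f_2(1,y). Then there exists a point p ∈ [0,1]² such that f(p) = ω. -/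
lemma affine_vert (g : (ℝ × ℝ) →ᵃ[ℝ] (Fin 3 → ℝ)) (x y y' : ℝ) (i : Fin 3) :
    g (x, y') i = g (x, y) i + (y' - y) * g.linear (0, 1) i := by
  have h : ((x, y') : ℝ × ℝ) = (y' - y) • ((0:ℝ), (1:ℝ)) +ᵥ (x, y) := by
    simp [Prod.ext_iff]
  rw [h, AffineMap.map_vadd, g.linear.map_smul]
  simp; ring

lemma affine_horiz (g : (ℝ × ℝ) →ᵃ[ℝ] (Fin 3 → ℝ)) (x x' y : ℝ) (i : Fin 3) :
    g (x', y) i = g (x, y) i + (x' - x) * g.linear (1, 0) i := by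
  have h : ((x', y) : ℝ × ℝ) = (x' - x) • ((1:ℝ), (0:ℝ)) +ᵥ (x, y) := by
    simp [Prod.ext_iff]
  rw [h, AffineMap.map_vadd, g.linear.map_smul]
  simp; ring

lemma cover (N : ℕ) (hN : 1 ≤ N) (x : ℝ) (hx0 : 0 ≤ x) (hx1 : x ≤ 1) :
    ∃ k : ℕ, k < N ∧ (k : ℝ) / N ≤ x ∧ x ≤ ((k : ℝ) + 1) / N := by
  have hn : (0:ℝ) < N := by exact_mod_cast hN
  set k0 := ⌊x * N⌋₊ with hk0
  by_cases h : k0 < N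
  · refine ⟨k0, h, ?_, ?_⟩
    · rw [div_le_iff₀ hn]
      exact Nat.floor_le (by positivity)
    · rw [le_div_iff₀ hn]
      have := Nat.lt_floor_add_one (x * N)
      push_cast at this ⊢
      linarith
  · push_neg at h
    have hxN : (N : ℝ) ≤ x * N := by
      calc (N : ℝ) ≤ (k0 : ℝ) := by exact_mod_cast h
        _ ≤ x * N := Nat.floor_le (by positivity)
    have hx : x = 1 := le_antisymm hx1 (by nlinarith)
    refine ⟨N - 1, by omega, ?_, ?_⟩
    · have : ((N - 1 : ℕ) : ℝ) = (N : ℝ) - 1 := by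
        push_cast [Nat.cast_sub hN]; ring
      rw [this, hx, div_le_one hn]; linarith
    · have : ((N - 1 : ℕ) : ℝ) + 1 = (N : ℝ) := by
        push_cast [Nat.cast_sub hN]; ring
      rw [this, hx, le_div_iff₀ hn]; linarith

lemma cellMono (N : ℕ) (f : ℝ × ℝ → Fin 3 → ℝ) (hpa : IsPWAffine N f)
    (hmono : ∀ k : ℕ, k ≤ N → ∀ y y' : ℝ, 0 ≤ y → y ≤ y' → y' ≤ 1 →
      f ((k : ℝ) / N, y) 0 ≤ f ((k : ℝ) / N, y') 0)
    (k l : ℕ) (hk : k < N) (hl : l < N) (x y y' : ℝ)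
    (hx0 : (k : ℝ) / N ≤ x) (hx1 : x ≤ ((k : ℝ) + 1) / N)
    (hy0 : (l : ℝ) / N ≤ y) (hyy : y ≤ y') (hy1 : y' ≤ ((l : ℝ) + 1) / N) :
    f (x, y) 0 ≤ f (x, y') 0 := by
  have hn : (0:ℝ) < N := by
    have : 0 < N := Nat.pos_of_ne_zero (by omega)
    exact_mod_cast this
  obtain ⟨⟨g, hg⟩, ⟨g', hg'⟩⟩ := hpa k l hk hl
  have hl0 : (0:ℝ) ≤ (l : ℝ) / N := by positivity
  have hdiv : ∀ a b : ℝ, a ≤ b → a / N ≤ b / N := fun a b h =>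
    div_le_div_of_nonneg_right h hn.le
  have hll : (l : ℝ) / N ≤ ((l : ℝ) + 1) / N := hdiv _ _ (by linarith)
  have hl1 : ((l : ℝ) + 1) / N ≤ 1 := by
    rw [div_le_one hn]
    have : (l:ℝ) + 1 ≤ N := by exact_mod_cast hl
    linarith
  -- the two grid points on the left edge are in lowerTri
  have hmemL1 : ((k : ℝ) / N, (l : ℝ) / N) ∈ lowerTri N k l := by
    refine ⟨le_refl _, le_refl _, ?_⟩
    rw [← add_div]
    exact hdiv _ _ (by linarith)
  have hmemL2 : ((k : ℝ) / N, ((l : ℝ) + 1) / N) ∈ lowerTri N k l := by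
    refine ⟨le_refl _, hll, ?_⟩
    rw [← add_div]
    exact hdiv _ _ (by ring_nf; linarith)
  have hmemU1 : (((k : ℝ) + 1) / N, (l : ℝ) / N) ∈ upperTri N k l := by
    refine ⟨le_refl _, hll, ?_⟩
    rw [← add_div]
    exact hdiv _ _ (by ring_nf; linarith)
  have hmemU2 : (((k : ℝ) + 1) / N, ((l : ℝ) + 1) / N) ∈ upperTri N k l := by
    refine ⟨le_refl _, le_refl _, ?_⟩
    rw [← add_div]
    exact hdiv _ _ (by linarith)
  -- slope of lower affine piece
  have hkN : ((k:ℝ)+1)/N = (((k+1:ℕ)):ℝ)/N := by push_cast; ring_nf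
  have hdg : 0 ≤ g.linear (0, 1) 0 := by
    have h1 := hmono k hk.le ((l : ℝ) / N) (((l : ℝ) + 1) / N) hl0 hll hl1
    rw [hg _ hmemL1, hg _ hmemL2, affine_vert g ((k:ℝ)/N) ((l:ℝ)/N) (((l:ℝ)+1)/N) 0] at h1
    have h2 : ((l:ℝ)+1)/N - (l:ℝ)/N = 1/N := by field_simp; ring
    rw [h2] at h1
    nlinarith [one_div_pos.mpr hn]
  have hdg' : 0 ≤ g'.linear (0, 1) 0 := by
    have h1 := hmono (k+1) hk ((l : ℝ) / N) (((l : ℝ) + 1) / N) hl0 hll hl1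
    rw [← hkN] at h1
    rw [hg' _ hmemU1, hg' _ hmemU2, affine_vert g' (((k:ℝ)+1)/N) ((l:ℝ)/N) (((l:ℝ)+1)/N) 0] at h1
    have h2 : ((l:ℝ)+1)/N - (l:ℝ)/N = 1/N := by field_simp; ring
    rw [h2] at h1
    nlinarith [one_div_pos.mpr hn]
  set yc := ((k : ℝ) + l + 1) / N - x with hyc
  have hycl : (l : ℝ) / N ≤ yc := by
    rw [hyc]
    have : ((k:ℝ)+l+1)/N = ((k:ℝ)+1)/N + (l:ℝ)/N := by
      rw [← add_div]; ring_nf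
    rw [this]; linarith
  have hycu : yc ≤ ((l : ℝ) + 1) / N := by
    rw [hyc]
    have : ((k:ℝ)+l+1)/N = (k:ℝ)/N + ((l:ℝ)+1)/N := by
      rw [← add_div]; ring_nf
    rw [this]; linarith
  have lowStep : ∀ a b : ℝ, (l:ℝ)/N ≤ a → a ≤ b → x + b ≤ ((k:ℝ)+l+1)/N →
      f (x, a) 0 ≤ f (x, b) 0 := by
    intro a b ha hab hb
    have hma : (x, a) ∈ lowerTri N k l := ⟨hx0, ha, by linarith⟩
    have hmb : (x, b) ∈ lowerTri N k l := ⟨hx0, le_trans ha hab, hb⟩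
    rw [hg _ hma, hg _ hmb, affine_vert g x a b 0]
    nlinarith
  have upStep : ∀ a b : ℝ, ((k:ℝ)+l+1)/N ≤ x + a → a ≤ b → b ≤ ((l:ℝ)+1)/N →
      f (x, a) 0 ≤ f (x, b) 0 := by
    intro a b ha hab hb
    have hma : (x, a) ∈ upperTri N k l := ⟨hx1, le_trans hab hb, ha⟩
    have hmb : (x, b) ∈ upperTri N k l := ⟨hx1, hb, by linarith⟩
    rw [hg' _ hma, hg' _ hmb, affine_vert g' x a b 0]
    nlinarith
  rcases le_or_gt y' yc with h1 | h1
  · exact lowStep y y' hy0 hyy (by rw [hyc] at h1; linarith)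
  · rcases le_or_gt yc y with h2 | h2
    · exact upStep y y' (by rw [hyc] at h2; linarith) hyy hy1
    · calc f (x, y) 0 ≤ f (x, yc) 0 := lowStep y yc hy0 h2.le (by rw [hyc]; ring_nf; exact le_refl _)
        _ ≤ f (x, y') 0 := upStep yc y' (by rw [hyc]; ring_nf; exact le_refl _) h1.le hy1

lemma vertMono (N : ℕ) (hN : 1 ≤ N) (f : ℝ × ℝ → Fin 3 → ℝ) (hpa : IsPWAffine N f)
    (hmono : ∀ k : ℕ, k ≤ N → ∀ y y' : ℝ, 0 ≤ y → y ≤ y' → y' ≤ 1 →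
      f ((k : ℝ) / N, y) 0 ≤ f ((k : ℝ) / N, y') 0)
    (x : ℝ) (hx0 : 0 ≤ x) (hx1 : x ≤ 1) :
    ∀ y y' : ℝ, 0 ≤ y → y ≤ y' → y' ≤ 1 → f (x, y) 0 ≤ f (x, y') 0 := by
  have hn : (0:ℝ) < N := by exact_mod_cast hN
  obtain ⟨k, hk, hkx, hkx'⟩ := cover N hN x hx0 hx1
  have key : ∀ l : ℕ, l ≤ N → ∀ y y' : ℝ, 0 ≤ y → y ≤ y' → y' ≤ (l : ℝ) / N →
      f (x, y) 0 ≤ f (x, y') 0 := by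
    intro l
    induction l with
    | zero =>
      intro _ y y' h0 hyy h1
      have hy'0 : y' ≤ 0 := by simpa using h1
      have : y = y' := le_antisymm hyy (by linarith)
      rw [this]
    | succ l ih =>
      intro hlN y y' h0 hyy h1
      have hlN' : l ≤ N := by omega
      have hcast : ((l + 1 : ℕ) : ℝ) = (l : ℝ) + 1 := by push_cast; ring
      rw [hcast] at h1
      rcases le_or_gt y' ((l : ℝ) / N) with h2 | h2
      · exact ih hlN' y y' h0 hyy h2
      · rcases le_or_gt ((l : ℝ) / N) y with h3 | h3
        · exact cellMono N f hpa hmono k l hk (by omega) x y y' hkx hkx' h3 hyy h1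
        · calc f (x, y) 0 ≤ f (x, (l : ℝ) / N) 0 :=
              ih hlN' y ((l : ℝ) / N) h0 h3.le (le_refl _)
            _ ≤ f (x, y') 0 :=
              cellMono N f hpa hmono k l hk (by omega) x _ y' hkx hkx' (le_refl _) h2.le h1
  intro y y' h0 hyy h1
  exact key N (le_refl _) y y' h0 hyy (by rw [div_self hn.ne']; exact h1)

lemma botBound (N : ℕ) (hN : 1 ≤ N) (t : ℝ) (f : ℝ × ℝ → Fin 3 → ℝ) (hpa : IsPWAffine N f)
    (hbd : ∀ k : ℕ, k ≤ N → f ((k : ℝ) / N, 0) 0 < t ∧ t < f ((k : ℝ) / N, 1) 0)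
    (x : ℝ) (hx0 : 0 ≤ x) (hx1 : x ≤ 1) : f (x, 0) 0 < t := by
  have hn : (0:ℝ) < N := by exact_mod_cast hN
  have hdiv : ∀ a b : ℝ, a ≤ b → a / N ≤ b / N := fun a b h =>
    div_le_div_of_nonneg_right h hn.le
  obtain ⟨k, hk, hkx, hkx'⟩ := cover N hN x hx0 hx1
  obtain ⟨⟨g, hg⟩, -⟩ := hpa k 0 hk (by omega)
  have hsum : ((k:ℝ) + (0:ℕ) + 1) / N = ((k:ℝ)+1)/N := by push_cast; ring_nf
  have hz : ((0:ℕ):ℝ)/N ≤ (0:ℝ) := by simp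
  have hm1 : ((k : ℝ) / N, (0:ℝ)) ∈ lowerTri N k 0 := by
    refine ⟨le_refl _, hz, ?_⟩
    rw [hsum, add_zero]
    exact hdiv _ _ (by linarith)
  have hm2 : (((k : ℝ) + 1) / N, (0:ℝ)) ∈ lowerTri N k 0 := by
    refine ⟨hdiv _ _ (by linarith), hz, ?_⟩
    rw [hsum, add_zero]
  have hmx : ((x : ℝ), (0:ℝ)) ∈ lowerTri N k 0 := by
    refine ⟨hkx, by simpa using hx0, ?_⟩
    rw [hsum, add_zero]
    exact hkx'
  have ha := (hbd k hk.le).1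
  have hb := (hbd (k+1) hk).1
  have hcast : (((k+1:ℕ)):ℝ) = (k:ℝ)+1 := by push_cast; ring
  rw [hcast] at hb
  rw [hg _ hm1] at ha
  rw [hg _ hm2] at hb
  rw [hg _ hmx, affine_horiz g ((k:ℝ)/N) x 0 0]
  rw [affine_horiz g ((k:ℝ)/N) (((k:ℝ)+1)/N) 0 0] at hb
  have hgap : ((k:ℝ)+1)/N - (k:ℝ)/N = 1/N := by field_simp; ring
  rw [hgap] at hb
  set d := g.linear (1, 0) 0
  set a := g ((k:ℝ)/N, (0:ℝ)) 0
  -- a + (x - k/N) * d < t given a < t, a + (1/N) d < t, 0 ≤ x - k/N ≤ 1/N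
  have h1 : 0 ≤ x - (k:ℝ)/N := by linarith
  have h2 : x - (k:ℝ)/N ≤ 1/N := by linarith
  rcases le_or_gt d 0 with hd | hd
  · nlinarith
  · nlinarith

lemma topBound (N : ℕ) (hN : 1 ≤ N) (t : ℝ) (f : ℝ × ℝ → Fin 3 → ℝ) (hpa : IsPWAffine N f)
    (hbd : ∀ k : ℕ, k ≤ N → f ((k : ℝ) / N, 0) 0 < t ∧ t < f ((k : ℝ) / N, 1) 0)
    (x : ℝ) (hx0 : 0 ≤ x) (hx1 : x ≤ 1) : t < f (x, 1) 0 := by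
  have hn : (0:ℝ) < N := by exact_mod_cast hN
  have hdiv : ∀ a b : ℝ, a ≤ b → a / N ≤ b / N := fun a b h =>
    div_le_div_of_nonneg_right h hn.le
  obtain ⟨k, hk, hkx, hkx'⟩ := cover N hN x hx0 hx1
  obtain ⟨-, ⟨g, hg⟩⟩ := hpa k (N-1) hk (by omega)
  have hNc : (((N-1:ℕ)):ℝ) = (N:ℝ) - 1 := by
    push_cast [Nat.cast_sub hN]; ring
  have htop : (((N-1:ℕ)):ℝ)/N + 1/N = 1 := by
    rw [hNc]; field_simp; ring
  have h1N : ((((N-1:ℕ)):ℝ) + 1)/N = 1 := by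
    rw [hNc]; field_simp; ring
  have hsum : ((k:ℝ) + (((N-1:ℕ)):ℝ) + 1) / N = (k:ℝ)/N + 1 := by
    rw [hNc]
    field_simp
    ring
  have hm1 : ((k : ℝ) / N, (1:ℝ)) ∈ upperTri N k (N-1) := by
    refine ⟨hdiv _ _ (by linarith), le_of_eq h1N.symm, ?_⟩
    rw [hsum]
  have hm2 : (((k : ℝ) + 1) / N, (1:ℝ)) ∈ upperTri N k (N-1) := by
    refine ⟨le_refl _, le_of_eq h1N.symm, ?_⟩
    rw [hsum]
    have := hdiv (k:ℝ) ((k:ℝ)+1) (by linarith)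
    linarith
  have hmx : ((x : ℝ), (1:ℝ)) ∈ upperTri N k (N-1) := by
    refine ⟨hkx', le_of_eq h1N.symm, ?_⟩
    rw [hsum]
    linarith
  have ha := (hbd k hk.le).2
  have hb := (hbd (k+1) hk).2
  have hcast : (((k+1:ℕ)):ℝ) = (k:ℝ)+1 := by push_cast; ring
  rw [hcast] at hb
  rw [hg _ hm1] at ha
  rw [hg _ hm2] at hb
  rw [hg _ hmx, affine_horiz g ((k:ℝ)/N) x 1 0]
  rw [affine_horiz g ((k:ℝ)/N) (((k:ℝ)+1)/N) 1 0] at hb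
  have hgap : ((k:ℝ)+1)/N - (k:ℝ)/N = 1/N := by field_simp; ring
  rw [hgap] at hb
  set d := g.linear (1, 0) 0
  set a := g ((k:ℝ)/N, (1:ℝ)) 0
  have h1 : 0 ≤ x - (k:ℝ)/N := by linarith
  have h2 : x - (k:ℝ)/N ≤ 1/N := by linarith
  rcases le_or_gt 0 d with hd | hd
  · nlinarith
  · nlinarith

lemma isClosed_lowerTri (N k l : ℕ) : IsClosed (lowerTri N k l) := by
  have : lowerTri N k l = {p : ℝ × ℝ | (k : ℝ) / N ≤ p.1} ∩
      ({p : ℝ × ℝ | (l : ℝ) / N ≤ p.2} ∩ {p : ℝ × ℝ | p.1 + p.2 ≤ ((k : ℝ) + l + 1) / N}) := by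
    ext p; simp [lowerTri, Set.mem_setOf_eq, Set.mem_inter_iff, and_assoc]
  rw [this]
  exact (isClosed_le continuous_const continuous_fst).inter
    ((isClosed_le continuous_const continuous_snd).inter
      (isClosed_le (continuous_fst.add continuous_snd) continuous_const))

lemma isClosed_upperTri (N k l : ℕ) : IsClosed (upperTri N k l) := by
  have : upperTri N k l = {p : ℝ × ℝ | p.1 ≤ ((k : ℝ) + 1) / N} ∩
      ({p : ℝ × ℝ | p.2 ≤ ((l : ℝ) + 1) / N} ∩ {p : ℝ × ℝ | ((k : ℝ) + l + 1) / N ≤ p.1 + p.2}) := by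
    ext p; simp [upperTri, Set.mem_setOf_eq, Set.mem_inter_iff, and_assoc]
  rw [this]
  exact (isClosed_le continuous_fst continuous_const).inter
    ((isClosed_le continuous_snd continuous_const).inter
      (isClosed_le continuous_const (continuous_fst.add continuous_snd)))

lemma contF (N : ℕ) (hN : 1 ≤ N) (f : ℝ × ℝ → Fin 3 → ℝ) (hpa : IsPWAffine N f) :
    ContinuousOn f (Set.Icc (0:ℝ) 1 ×ˢ Set.Icc (0:ℝ) 1) := by
  have hn : (0:ℝ) < N := by exact_mod_cast hN
  set S : Fin N × Fin N × Bool → Set (ℝ × ℝ) := fun i =>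
    if i.2.2 then lowerTri N i.1 i.2.1 else upperTri N i.1 i.2.1 with hS
  have hlf : LocallyFinite S := locallyFinite_of_finite S
  have hcl : ∀ i, IsClosed (S i) := by
    intro i
    rw [hS]
    dsimp only
    split
    · exact isClosed_lowerTri N i.1 i.2.1
    · exact isClosed_upperTri N i.1 i.2.1
  have hcont : ∀ i, ContinuousOn f (S i) := by
    intro i
    obtain ⟨⟨g, hg⟩, ⟨g', hg'⟩⟩ := hpa i.1 i.2.1 i.1.2 i.2.1.2
    rw [hS]; dsimp only
    split
    · exact g.continuous_of_finiteDimensional.continuousOn.congr hg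
    · exact g'.continuous_of_finiteDimensional.continuousOn.congr hg'
  have hsub : Set.Icc (0:ℝ) 1 ×ˢ Set.Icc (0:ℝ) 1 ⊆ ⋃ i, S i := by
    rintro ⟨x, y⟩ ⟨⟨hx0, hx1⟩, ⟨hy0, hy1⟩⟩
    obtain ⟨k, hk, hkx, hkx'⟩ := cover N hN x hx0 hx1
    obtain ⟨l, hl, hly, hly'⟩ := cover N hN y hy0 hy1
    rcases le_or_gt (x + y) (((k:ℝ) + l + 1)/N) with h | h
    · exact Set.mem_iUnion.mpr ⟨⟨⟨k, hk⟩, ⟨l, hl⟩, true⟩, ⟨hkx, hly, h⟩⟩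
    · refine Set.mem_iUnion.mpr ⟨⟨⟨k, hk⟩, ⟨l, hl⟩, false⟩, ⟨hkx', hly', h.le⟩⟩
  exact (hlf.continuousOn_iUnion hcl hcont).mono hsub

/-- Lemma: existence of a point mapped to `ω = (t, (1−t)/2, (1−t)/2)`.
Fix `N ≥ 1`, `t ∈ (0,1)`, and a `T`-piecewise affine `f : [0,1]² → Δ²` such that: `f` is
vertically monotone at every `x = k/N`; `f₁(v) ≠ t` at every grid vertex; `f₁(k/N, 0) < t <
f₁(k/N, 1)` for every `k ∈ {0,…,N}`; and for every `y ∈ [0,1]`, `f₁(0,y) = f₁(1,y)`,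
`f₂(0,y) = f₃(1,y)`, and `f₃(0,y) = f₂(1,y)`. Then some point of `[0,1]²` is mapped by `f`
to `ω`. -/
theorem stmt12 (N : ℕ) (hN : 1 ≤ N) (t : ℝ) (ht : t ∈ Set.Ioo (0 : ℝ) 1)
    (f : ℝ × ℝ → Fin 3 → ℝ)
    (hpa : IsPWAffine N f)
    (hmem : ∀ p : ℝ × ℝ, p ∈ Set.Icc (0 : ℝ) 1 ×ˢ Set.Icc (0 : ℝ) 1 →
      f p ∈ stdSimplex ℝ (Fin 3))
    (hmono : ∀ k : ℕ, k ≤ N → ∀ y y' : ℝ, 0 ≤ y → y ≤ y' → y' ≤ 1 →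
      f ((k : ℝ) / N, y) 0 ≤ f ((k : ℝ) / N, y') 0)
    (hvne : ∀ k l : ℕ, k ≤ N → l ≤ N → f ((k : ℝ) / N, (l : ℝ) / N) 0 ≠ t)
    (hbd : ∀ k : ℕ, k ≤ N → f ((k : ℝ) / N, 0) 0 < t ∧ t < f ((k : ℝ) / N, 1) 0)
    (hsym : ∀ y : ℝ, 0 ≤ y → y ≤ 1 →
      f (0, y) 0 = f (1, y) 0 ∧ f (0, y) 1 = f (1, y) 2 ∧ f (0, y) 2 = f (1, y) 1) :
    ∃ p ∈ Set.Icc (0 : ℝ) 1 ×ˢ Set.Icc (0 : ℝ) 1,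
      f p = ![t, (1 - t) / 2, (1 - t) / 2] := by
  set Q : Set (ℝ × ℝ) := Set.Icc (0:ℝ) 1 ×ˢ Set.Icc (0:ℝ) 1 with hQ
  have hQc : IsClosed Q := (isClosed_Icc).prod isClosed_Icc
  have hQcomp : IsCompact Q := (isCompact_Icc).prod isCompact_Icc
  have hfc : ContinuousOn f Q := contF N hN f hpa
  have hmonoAll := vertMono N hN f hpa hmono
  -- vertical fiber continuity
  have hfib : ∀ x : ℝ, x ∈ Set.Icc (0:ℝ) 1 →
      ContinuousOn (fun y => f (x, y)) (Set.Icc (0:ℝ) 1) := by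
    intro x hx
    apply hfc.comp (Continuous.continuousOn (by fun_prop))
    intro y hy
    exact ⟨hx, hy⟩
  -- sets A and B
  set A : Set ℝ := {x | x ∈ Set.Icc (0:ℝ) 1 ∧ ∃ y ∈ Set.Icc (0:ℝ) 1,
      f (x, y) 0 = t ∧ f (x, y) 2 ≤ f (x, y) 1} with hA
  set B : Set ℝ := {x | x ∈ Set.Icc (0:ℝ) 1 ∧ ∃ y ∈ Set.Icc (0:ℝ) 1,
      f (x, y) 0 = t ∧ f (x, y) 1 ≤ f (x, y) 2} with hB
  have closedAux : ∀ (C : Set (Fin 3 → ℝ)), IsClosed C →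
      IsClosed {x | x ∈ Set.Icc (0:ℝ) 1 ∧ ∃ y ∈ Set.Icc (0:ℝ) 1, f (x, y) ∈ C} := by
    intro C hC
    have hK : IsClosed (Q ∩ f ⁻¹' C) := hfc.preimage_isClosed_of_isClosed hQc hC
    have hKcomp : IsCompact (Q ∩ f ⁻¹' C) :=
      hQcomp.of_isClosed_subset hK Set.inter_subset_left
    have himg : IsCompact (Prod.fst '' (Q ∩ f ⁻¹' C)) := hKcomp.image continuous_fst
    have heq : {x | x ∈ Set.Icc (0:ℝ) 1 ∧ ∃ y ∈ Set.Icc (0:ℝ) 1, f (x, y) ∈ C}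
        = Prod.fst '' (Q ∩ f ⁻¹' C) := by
      ext x
      constructor
      · rintro ⟨hx, y, hy, hfy⟩
        exact ⟨(x, y), ⟨⟨hx, hy⟩, hfy⟩, rfl⟩
      · rintro ⟨⟨x', y⟩, ⟨⟨hx, hy⟩, hfy⟩, rfl⟩
        exact ⟨hx, y, hy, hfy⟩
    rw [heq]
    exact himg.isClosed
  have hAc : IsClosed A := by
    have := closedAux {v : Fin 3 → ℝ | v 0 = t ∧ v 2 ≤ v 1}
      (((isClosed_eq (continuous_apply 0) continuous_const)).inter
        (isClosed_le (continuous_apply 2) (continuous_apply 1)))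
    convert this using 2
    rfl
  have hBc : IsClosed B := by
    have := closedAux {v : Fin 3 → ℝ | v 0 = t ∧ v 1 ≤ v 2}
      (((isClosed_eq (continuous_apply 0) continuous_const)).inter
        (isClosed_le (continuous_apply 1) (continuous_apply 2)))
    convert this using 2
    rfl
  -- every x has a crossing
  have hcross : ∀ x : ℝ, x ∈ Set.Icc (0:ℝ) 1 →
      ∃ y ∈ Set.Icc (0:ℝ) 1, f (x, y) 0 = t := by
    intro x hx
    have hc : ContinuousOn (fun y => f (x, y) 0) (Set.Icc (0:ℝ) 1) :=
      (continuous_apply (0 : Fin 3)).comp_continuousOn (hfib x hx)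
    have hivt := intermediate_value_Icc (by norm_num : (0:ℝ) ≤ 1) hc
    have htm : t ∈ Set.Icc (f (x, 0) 0) (f (x, 1) 0) :=
      ⟨(botBound N hN t f hpa hbd x hx.1 hx.2).le, (topBound N hN t f hpa hbd x hx.1 hx.2).le⟩
    obtain ⟨y, hy, hyt⟩ := hivt htm
    exact ⟨y, hy, hyt⟩
  have hcover : Set.Icc (0:ℝ) 1 ⊆ A ∪ B := by
    intro x hx
    obtain ⟨y, hy, hyt⟩ := hcross x hx
    rcases le_total (f (x, y) 2) (f (x, y) 1) with h | h
    · exact Or.inl ⟨hx, y, hy, hyt, h⟩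
    · exact Or.inr ⟨hx, y, hy, hyt, h⟩
  -- A and B are nonempty
  have h01 : (0:ℝ) ∈ Set.Icc (0:ℝ) 1 := by norm_num
  have h11 : (1:ℝ) ∈ Set.Icc (0:ℝ) 1 := by norm_num
  have hABne : (Set.Icc (0:ℝ) 1 ∩ A).Nonempty ∧ (Set.Icc (0:ℝ) 1 ∩ B).Nonempty := by
    rcases hcover h01 with h | h
    · have h0 := h
      obtain ⟨-, y, hy, hyt, hle⟩ := h
      obtain ⟨e0, e1, e2⟩ := hsym y hy.1 hy.2
      refine ⟨⟨0, h01, h0⟩, ⟨1, h11, h11, y, hy, ?_, ?_⟩⟩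
      · rw [← e0]; exact hyt
      · rw [← e1, ← e2]; exact hle
    · have h0 := h
      obtain ⟨-, y, hy, hyt, hle⟩ := h
      obtain ⟨e0, e1, e2⟩ := hsym y hy.1 hy.2
      refine ⟨⟨1, h11, h11, y, hy, ?_, ?_⟩, ⟨0, h01, h0⟩⟩
      · rw [← e0]; exact hyt
      · rw [← e2, ← e1]; exact hle
  obtain ⟨x, hxmem⟩ :=
    isPreconnected_closed_iff.1 isPreconnected_Icc A B hAc hBc hcover hABne.1 hABne.2
  obtain ⟨-, hxA, hxB⟩ := hxmem
  obtain ⟨hx, y₁, hy₁, ht₁, hc₁⟩ := hxA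
  obtain ⟨-, y₂, hy₂, ht₂, hc₂⟩ := hxB
  -- IVT on h = f 1 - f 2 along the fiber
  set h : ℝ → ℝ := fun y => f (x, y) 1 - f (x, y) 2 with hh
  have huIcc : Set.uIcc y₁ y₂ ⊆ Set.Icc (0:ℝ) 1 := by
    rw [Set.uIcc]
    exact Set.Icc_subset_Icc (le_inf hy₁.1 hy₂.1) (sup_le hy₁.2 hy₂.2)
  have hhc : ContinuousOn h (Set.uIcc y₁ y₂) := by
    apply ContinuousOn.sub
    · exact ((continuous_apply (1 : Fin 3)).comp_continuousOn (hfib x hx)).mono huIcc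
    · exact ((continuous_apply (2 : Fin 3)).comp_continuousOn (hfib x hx)).mono huIcc
  have h0mem : (0:ℝ) ∈ Set.uIcc (h y₁) (h y₂) := by
    rw [Set.mem_uIcc]
    right
    constructor
    · simp only [hh]; linarith
    · simp only [hh]; linarith
  obtain ⟨y, hyu, hy0⟩ := intermediate_value_uIcc hhc h0mem
  have hyI : y ∈ Set.Icc (0:ℝ) 1 := huIcc hyu
  -- f (x, y) 0 = t
  have hmin : f (x, y₁ ⊓ y₂) 0 = t := by
    rcases inf_eq_left.2 (le_refl y₁) with _
    rcases le_total y₁ y₂ with hc | hc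
    · rw [inf_eq_left.2 hc]; exact ht₁
    · rw [inf_eq_right.2 hc]; exact ht₂
  have hmax : f (x, y₁ ⊔ y₂) 0 = t := by
    rcases le_total y₁ y₂ with hc | hc
    · rw [sup_eq_right.2 hc]; exact ht₂
    · rw [sup_eq_left.2 hc]; exact ht₁
  have hyuIcc : y ∈ Set.Icc (y₁ ⊓ y₂) (y₁ ⊔ y₂) := by rwa [← Set.uIcc]
  have hft : f (x, y) 0 = t := by
    have hmemI : y₁ ⊓ y₂ ∈ Set.Icc (0:ℝ) 1 := huIcc (by rw [Set.uIcc]; exact ⟨le_refl _, inf_le_sup⟩)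
    have hmemS : y₁ ⊔ y₂ ∈ Set.Icc (0:ℝ) 1 := huIcc (by rw [Set.uIcc]; exact ⟨inf_le_sup, le_refl _⟩)
    have h1 := hmonoAll x hx.1 hx.2 (y₁ ⊓ y₂) y hmemI.1 hyuIcc.1 hyI.2
    have h2 := hmonoAll x hx.1 hx.2 y (y₁ ⊔ y₂) hyI.1 hyuIcc.2 hmemS.2
    rw [hmin] at h1
    rw [hmax] at h2
    linarith
  -- conclude
  have hp : (x, y) ∈ Q := ⟨hx, hyI⟩
  have hstd := hmem (x, y) hp
  have hsum : f (x, y) 0 + f (x, y) 1 + f (x, y) 2 = 1 := by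
    have := hstd.2
    rw [Fin.sum_univ_three] at this
    exact this
  have h12 : f (x, y) 1 = f (x, y) 2 := by
    have : h y = 0 := hy0
    simp only [hh] at this
    linarith
  have hf1 : f (x, y) 1 = (1 - t) / 2 := by linarith
  have hf2 : f (x, y) 2 = (1 - t) / 2 := by linarith
  refine ⟨(x, y), hp, ?_⟩
  funext i
  fin_cases i
  · simpa using hft
  · simpa using hf1
  · simpa using hf2
end
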